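/- The axiom system E_RS = E_1 ∪ {RS, RSP1, RSP2, EL2} is sound and ground-complete modulo ready simulation equivalence ∼_RS over CCS. -/

import Mathlib

/-- Actions: names, co-names and the silent action τ. -/
inductive Act (A : Type) : Type
  | name : A → Act A
  | coname : A → Act A
  | tau : Act A
  deriving DecidableEq

/-- Complementation of actions (`co` of τ is τ; it is only ever used on non-τ actions). -/
def Act.co {A : Type} : Act A → Act A
  | .name a => .coname a
  | .coname a => .name a
  | .tau => .tau

/-- CCS terms: 0, variables, prefixing, choice and parallel composition. -/
inductive Tm (A : Type) : Type
  | nil : Tm A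
  | var : ℕ → Tm A
  | pre : Act A → Tm A → Tm A
  | plus : Tm A → Tm A → Tm A
  | par : Tm A → Tm A → Tm A

/-- The SOS transition relation of CCS. -/
inductive Step {A : Type} : Tm A → Act A → Tm A → Prop
  | pre (μ : Act A) (t : Tm A) : Step (.pre μ t) μ t
  | plusL {t u t' : Tm A} {μ : Act A} : Step t μ t' → Step (.plus t u) μ t'
  | plusR {t u u' : Tm A} {μ : Act A} : Step u μ u' → Step (.plus t u) μ u'
  | parL {t u t' : Tm A} {μ : Act A} : Step t μ t' → Step (.par t u) μ (.par t' u)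
  | parR {t u u' : Tm A} {μ : Act A} : Step u μ u' → Step (.par t u) μ (.par t u')
  | comm {t u t' u' : Tm A} {α : Act A} : α ≠ Act.tau → Step t α t' → Step u α.co u' →
      Step (.par t u) .tau (.par t' u')

/-- A term is closed (a process) if no variable occurs in it. -/
def Closed {A : Type} : Tm A → Prop
  | .nil => True
  | .var _ => False
  | .pre _ t => Closed t
  | .plus t u => Closed t ∧ Closed u
  | .par t u => Closed t ∧ Closed u

/-- Applying a substitution to a term. -/
def subst {A : Type} (σ : ℕ → Tm A) : Tm A → Tm A
  | .nil => .nil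
  | .var x => σ x
  | .pre μ t => .pre μ (subst σ t)
  | .plus t u => .plus (subst σ t) (subst σ u)
  | .par t u => .par (subst σ t) (subst σ u)

/-- A substitution is closed if all its values are closed. -/
def ClosedSubst {A : Type} (σ : ℕ → Tm A) : Prop := ∀ x, Closed (σ x)

/-- `R` is a bisimulation (symmetric, with the transfer property). -/
def IsBisim {A : Type} (R : Tm A → Tm A → Prop) : Prop :=
  (∀ p q, R p q → R q p) ∧
  (∀ p q μ p', R p q → Step p μ p' → ∃ q', Step q μ q' ∧ R p' q')

/-- Bisimilarity: the largest bisimulation. -/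
def Bisim {A : Type} (p q : Tm A) : Prop := ∃ R, IsBisim R ∧ R p q

/-- Equations are pairs of terms. -/
abbrev Eqn (A : Type) := Tm A × Tm A

/-- Derivability in equational logic from the axiom system `E`. -/
inductive Deriv {A : Type} (E : Set (Eqn A)) : Tm A → Tm A → Prop
  | ax {t u : Tm A} (σ : ℕ → Tm A) (h : (t, u) ∈ E) : Deriv E (subst σ t) (subst σ u)
  | refl (t : Tm A) : Deriv E t t
  | symm {t u : Tm A} (h : Deriv E t u) : Deriv E u t
  | trans {t u v : Tm A} (h₁ : Deriv E t u) (h₂ : Deriv E u v) : Deriv E t v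
  | pre (μ : Act A) {t u : Tm A} (h : Deriv E t u) : Deriv E (.pre μ t) (.pre μ u)
  | plus {t u t' u' : Tm A} (h₁ : Deriv E t u) (h₂ : Deriv E t' u') :
      Deriv E (.plus t t') (.plus u u')
  | par {t u t' u' : Tm A} (h₁ : Deriv E t u) (h₂ : Deriv E t' u') :
      Deriv E (.par t t') (.par u u')

/-- An equation is sound modulo `sim` if all its closed instances are related by `sim`. -/
def EqnSound {A : Type} (sim : Tm A → Tm A → Prop) (t u : Tm A) : Prop :=
  ∀ σ : ℕ → Tm A, ClosedSubst σ → sim (subst σ t) (subst σ u)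

/-- An axiom system is sound modulo `sim` if each of its equations is. -/
def SystemSound {A : Type} (sim : Tm A → Tm A → Prop) (E : Set (Eqn A)) : Prop :=
  ∀ e ∈ E, EqnSound sim e.1 e.2

/-- An axiom system is ground-complete modulo `sim` if it derives every valid
closed equation. -/
def GroundComplete {A : Type} (sim : Tm A → Tm A → Prop) (E : Set (Eqn A)) : Prop :=
  ∀ p q : Tm A, Closed p → Closed q → sim p q → Deriv E p q

/-- `sumF g n` is the sum `g 1 + ⋯ + g n` (empty sum being 0, no padding for `n = 1`). -/
def sumF {A : Type} (g : ℕ → Tm A) : ℕ → Tm A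
  | 0 => .nil
  | 1 => g 1
  | n + 2 => .plus (sumF g (n + 1)) (g (n + 2))

/-- The basic axioms A0–A3 for choice (variables `x, y, z` rendered as `var 0, 1, 2`). -/
def E0 (A : Type) : Set (Eqn A) :=
  { (.plus (.var 0) .nil, .var 0),
    (.plus (.var 0) (.var 1), .plus (.var 1) (.var 0)),
    (.plus (.plus (.var 0) (.var 1)) (.var 2), .plus (.var 0) (.plus (.var 1) (.var 2))),
    (.plus (.var 0) (.var 0), .var 0) }

/-- `E₁ = E₀ ∪ {P0 : x ‖ 0 ≈ x, P1 : x ‖ y ≈ y ‖ x}`. -/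
def E1 (A : Type) : Set (Eqn A) :=
  E0 A ∪ { (.par (.var 0) .nil, .var 0),
           (.par (.var 0) (.var 1), .par (.var 1) (.var 0)) }

/-- `R` is a simulation. -/
def IsSim {A : Type} (R : Tm A → Tm A → Prop) : Prop :=
  ∀ p q μ p', R p q → Step p μ p' → ∃ q', Step q μ q' ∧ R p' q'

/-- `R` is a ready simulation: a simulation relating only processes with equal initials. -/
def IsReadySim {A : Type} (R : Tm A → Tm A → Prop) : Prop :=
  IsSim R ∧ ∀ p q, R p q → ∀ μ, (∃ p', Step p μ p') ↔ (∃ q', Step q μ q')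

/-- Ready simulation equivalence. -/
def RSEq {A : Type} (p q : Tm A) : Prop :=
  (∃ R, IsReadySim R ∧ R p q) ∧ (∃ R, IsReadySim R ∧ R q p)

/-- Sum of a list of terms (the empty sum being 0). -/
def listSum {A : Type} : List (Tm A) → Tm A
  | [] => .nil
  | [t] => t
  | t :: u :: ts => .plus t (listSum (u :: ts))

/-- `prefixed I` is the term `Σ_{(μ,x) ∈ I} μ.x`. -/
def prefixed {A : Type} (I : List (Act A × ℕ)) : Tm A :=
  listSum (I.map fun p => Tm.pre p.1 (.var p.2))

/-- The axiom schema RS: `μ.(ν.x + ν.y + z) ≈ μ.(ν.x + ν.y + z) + μ.(ν.x + z)`. -/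
def RS (A : Type) : Set (Eqn A) :=
  { e | ∃ μ ν : Act A,
      e = (.pre μ (.plus (.plus (.pre ν (.var 0)) (.pre ν (.var 1))) (.var 2)),
           .plus (.pre μ (.plus (.plus (.pre ν (.var 0)) (.pre ν (.var 1))) (.var 2)))
                 (.pre μ (.plus (.pre ν (.var 0)) (.var 2)))) }

/-- The axiom schema RSP1 (variables `x, y, u, z, w, v` rendered as `var 0, …, var 5`). -/
def RSP1 (A : Type) : Set (Eqn A) :=
  { e | ∃ μ ν : Act A,
      e = (.par (.plus (.plus (.pre μ (.var 0)) (.pre μ (.var 1))) (.var 2))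
                (.plus (.plus (.pre ν (.var 3)) (.pre ν (.var 4))) (.var 5)),
           .plus (.plus (.plus
             (.par (.plus (.pre μ (.var 0)) (.var 2))
                   (.plus (.plus (.pre ν (.var 3)) (.pre ν (.var 4))) (.var 5)))
             (.par (.plus (.pre μ (.var 1)) (.var 2))
                   (.plus (.plus (.pre ν (.var 3)) (.pre ν (.var 4))) (.var 5))))
             (.par (.plus (.plus (.pre μ (.var 0)) (.pre μ (.var 1))) (.var 2))
                   (.plus (.pre ν (.var 3)) (.var 5))))
             (.par (.plus (.plus (.pre μ (.var 0)) (.pre μ (.var 1))) (.var 2))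
                   (.plus (.pre ν (.var 4)) (.var 5)))) }

/-- The axiom schema RSP2, for finite `I` with pairwise distinct actions `μ_i` and
pairwise distinct variables. -/
def RSP2 (A : Type) : Set (Eqn A) :=
  { e | ∃ (L : List (Act A × ℕ)) (ν : Act A) (iy iz iw : ℕ),
      (L.map Prod.fst).Nodup ∧ (L.map Prod.snd ++ [iy, iz, iw]).Nodup ∧
      e = (.par (prefixed L)
                (.plus (.plus (.pre ν (.var iy)) (.pre ν (.var iz))) (.var iw)),
           .plus (.plus
             (.par (prefixed L) (.plus (.pre ν (.var iy)) (.var iw)))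
             (.par (prefixed L) (.plus (.pre ν (.var iz)) (.var iw))))
             (listSum (L.map fun p =>
               Tm.pre p.1 (.par (.var p.2)
                 (.plus (.plus (.pre ν (.var iy)) (.pre ν (.var iz))) (.var iw)))))) }

/-- The instances EL2 of the expansion law in which the actions on each side are
pairwise distinct (and all variables are pairwise distinct). -/
def EL2 (A : Type) [DecidableEq A] : Set (Eqn A) :=
  { e | ∃ I J : List (Act A × ℕ),
      (I.map Prod.fst).Nodup ∧ (J.map Prod.fst).Nodup ∧
      (I.map Prod.snd ++ J.map Prod.snd).Nodup ∧
      e = (.par (prefixed I) (prefixed J),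
           listSum
             ((I.map fun p => Tm.pre p.1 (.par (.var p.2) (prefixed J))) ++
              (J.map fun q => Tm.pre q.1 (.par (prefixed I) (.var q.2))) ++
              (I.flatMap fun p =>
                (J.filter fun q => decide (p.1 ≠ Act.tau ∧ p.1 = q.1.co)).map fun q =>
                  Tm.pre .tau (.par (.var p.2) (.var q.2))))) }


namespace RSproof
open Tm Act

variable {A : Type}

/-! ### Basic facts about actions and steps -/

@[simp] lemma co_co (α : Act A) : α.co.co = α := by cases α <;> rfl

lemma co_ne_tau {α : Act A} (h : α ≠ Act.tau) : α.co ≠ Act.tau := by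
  cases α <;> simp_all [Act.co]

@[reducible] def canStep (p : Tm A) (μ : Act A) : Prop := ∃ p', Step p μ p'

lemma step_nil {μ : Act A} {t : Tm A} : ¬ Step (Tm.nil) μ t := by
  intro h; cases h

lemma step_var {n : ℕ} {μ : Act A} {t : Tm A} : ¬ Step (Tm.var n) μ t := by
  intro h; cases h

lemma step_pre_iff {ν : Act A} {u : Tm A} {μ : Act A} {t : Tm A} :
    Step (Tm.pre ν u) μ t ↔ μ = ν ∧ t = u := by
  constructor
  · rintro h; cases h; exact ⟨rfl, rfl⟩
  · rintro ⟨rfl, rfl⟩; exact .pre _ _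

lemma step_plus_iff {a b : Tm A} {μ : Act A} {t : Tm A} :
    Step (Tm.plus a b) μ t ↔ Step a μ t ∨ Step b μ t := by
  constructor
  · rintro h; cases h with
    | plusL h => exact Or.inl h
    | plusR h => exact Or.inr h
  · rintro (h | h); exacts [.plusL h, .plusR h]

lemma step_par_iff {a b : Tm A} {μ : Act A} {t : Tm A} :
    Step (Tm.par a b) μ t ↔
      (∃ a', Step a μ a' ∧ t = Tm.par a' b) ∨
      (∃ b', Step b μ b' ∧ t = Tm.par a b') ∨
      (μ = Act.tau ∧ ∃ α a' b', α ≠ Act.tau ∧ Step a α a' ∧ Step b α.co b' ∧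
        t = Tm.par a' b') := by
  constructor
  · rintro h; cases h with
    | parL h => exact Or.inl ⟨_, h, rfl⟩
    | parR h => exact Or.inr (Or.inl ⟨_, h, rfl⟩)
    | comm hα h₁ h₂ => exact Or.inr (Or.inr ⟨rfl, _, _, _, hα, h₁, h₂, rfl⟩)
  · rintro (⟨a', h, rfl⟩ | ⟨b', h, rfl⟩ | ⟨rfl, α, a', b', hα, h₁, h₂, rfl⟩)
    exacts [.parL h, .parR h, .comm hα h₁ h₂]

/-! ### Depth -/

def depth : Tm A → ℕ
  | .nil => 0
  | .var _ => 0
  | .pre _ t => depth t + 1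
  | .plus t u => max (depth t) (depth u)
  | .par t u => depth t + depth u

lemma step_depth {p : Tm A} {μ : Act A} {p' : Tm A} (h : Step p μ p') :
    depth p' < depth p := by
  induction h with
  | pre μ t => simp [depth]
  | plusL h ih => exact lt_of_lt_of_le ih (le_max_left _ _)
  | plusR h ih => exact lt_of_lt_of_le ih (le_max_right _ _)
  | parL h ih => simp only [depth]; omega
  | parR h ih => simp only [depth]; omega
  | comm hα h₁ h₂ ih₁ ih₂ => simp only [depth]; omega

end RSproof

namespace RSproof
open Tm Act

variable {A : Type}

/-! ### The ready simulation preorder -/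

def RSleq (p q : Tm A) : Prop := ∃ R, IsReadySim R ∧ R p q

lemma RSEq_iff {p q : Tm A} : RSEq p q ↔ RSleq p q ∧ RSleq q p := Iff.rfl

lemma isReadySim_RSleq : IsReadySim (RSleq (A := A)) := by
  constructor
  · rintro p q μ p' ⟨R, hR, hpq⟩ hstep
    obtain ⟨q', hq', h'⟩ := hR.1 p q μ p' hpq hstep
    exact ⟨q', hq', ⟨R, hR, h'⟩⟩
  · rintro p q ⟨R, hR, hpq⟩ μ
    exact hR.2 p q hpq μ

lemma RSleq.canStep_iff {p q : Tm A} (h : RSleq p q) (μ : Act A) :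
    canStep p μ ↔ canStep q μ := isReadySim_RSleq.2 p q h μ

lemma RSleq.step {p q : Tm A} (h : RSleq p q) {μ : Act A} {p' : Tm A}
    (hs : Step p μ p') : ∃ q', Step q μ q' ∧ RSleq p' q' :=
  isReadySim_RSleq.1 p q μ p' h hs

lemma RSleq.refl (p : Tm A) : RSleq p p := by
  refine ⟨Eq, ⟨?_, ?_⟩, rfl⟩
  · rintro p q μ p' rfl h; exact ⟨p', h, rfl⟩
  · rintro p q rfl μ; exact Iff.rfl

lemma RSleq.trans {p q r : Tm A} (h₁ : RSleq p q) (h₂ : RSleq q r) : RSleq p r := by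
  refine ⟨fun a c => ∃ b, RSleq a b ∧ RSleq b c, ⟨?_, ?_⟩, q, h₁, h₂⟩
  · rintro a c μ a' ⟨b, hab, hbc⟩ hs
    obtain ⟨b', hb', h₁'⟩ := hab.step hs
    obtain ⟨c', hc', h₂'⟩ := hbc.step hb'
    exact ⟨c', hc', b', h₁', h₂'⟩
  · rintro a c ⟨b, hab, hbc⟩ μ
    exact (hab.canStep_iff μ).trans (hbc.canStep_iff μ)

/-- Coinduction principle for `RSleq`. -/
lemma RSleq.coind (S : Tm A → Tm A → Prop)
    (h : ∀ a b, S a b →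
      (∀ μ a', Step a μ a' → ∃ b', Step b μ b' ∧ (S a' b' ∨ RSleq a' b')) ∧
      (∀ μ, canStep b μ → canStep a μ)) :
    ∀ a b, S a b → RSleq a b := by
  intro a b hab
  refine ⟨fun x y => S x y ∨ RSleq x y, ⟨?_, ?_⟩, Or.inl hab⟩
  · rintro x y μ x' (hxy | hxy) hs
    · exact (h x y hxy).1 μ x' hs
    · obtain ⟨y', hy', h'⟩ := hxy.step hs
      exact ⟨y', hy', Or.inr h'⟩
  · rintro x y (hxy | hxy) μ
    · constructor
      · rintro ⟨x', hx'⟩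
        obtain ⟨y', hy', -⟩ := (h x y hxy).1 μ x' hx'
        exact ⟨y', hy'⟩
      · exact (h x y hxy).2 μ
    · exact hxy.canStep_iff μ

/-- If every step of `p` is (syntactically) a step of `q`, and `q` has no extra
initial actions, then `p ⊑ q`. -/
lemma RSleq.mk' {p q : Tm A}
    (h₁ : ∀ μ p', Step p μ p' → ∃ q', Step q μ q' ∧ RSleq p' q')
    (h₂ : ∀ μ, canStep q μ → canStep p μ) : RSleq p q := by
  refine RSleq.coind (fun a b => a = p ∧ b = q) ?_ p q ⟨rfl, rfl⟩
  rintro a b ⟨rfl, rfl⟩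
  refine ⟨fun μ a' hs => ?_, h₂⟩
  obtain ⟨q', hq', h'⟩ := h₁ μ a' hs
  exact ⟨q', hq', Or.inr h'⟩

lemma RSleq.of_subset {p q : Tm A}
    (h₁ : ∀ μ t, Step p μ t → Step q μ t)
    (h₂ : ∀ μ, canStep q μ → canStep p μ) : RSleq p q :=
  RSleq.mk' (fun μ p' hs => ⟨p', h₁ μ p' hs, RSleq.refl p'⟩) h₂

lemma RSEq.of_steps_eq {p q : Tm A} (h : ∀ μ t, Step p μ t ↔ Step q μ t) :
    RSEq p q := by
  constructor
  · exact RSleq.of_subset (fun μ t ht => (h μ t).1 ht)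
      (fun μ ⟨t, ht⟩ => ⟨t, (h μ t).2 ht⟩)
  · exact RSleq.of_subset (fun μ t ht => (h μ t).2 ht)
      (fun μ ⟨t, ht⟩ => ⟨t, (h μ t).1 ht⟩)

/-! ### Congruence properties of `RSleq` -/

lemma RSleq.pre_cong (μ : Act A) {p q : Tm A} (h : RSleq p q) :
    RSleq (Tm.pre μ p) (Tm.pre μ q) := by
  refine RSleq.mk' ?_ ?_
  · rintro ν p' hs
    rw [step_pre_iff] at hs; obtain ⟨rfl, rfl⟩ := hs
    exact ⟨q, .pre _ _, h⟩
  · rintro ν ⟨t, ht⟩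
    rw [step_pre_iff] at ht
    exact ⟨p, ht.1 ▸ .pre _ _⟩

lemma RSleq.plus_cong {p q p' q' : Tm A} (h₁ : RSleq p q) (h₂ : RSleq p' q') :
    RSleq (Tm.plus p p') (Tm.plus q q') := by
  refine RSleq.mk' ?_ ?_
  · rintro μ t hs
    rw [step_plus_iff] at hs
    rcases hs with hs | hs
    · obtain ⟨u, hu, h'⟩ := h₁.step hs; exact ⟨u, .plusL hu, h'⟩
    · obtain ⟨u, hu, h'⟩ := h₂.step hs; exact ⟨u, .plusR hu, h'⟩
  · rintro μ ⟨t, ht⟩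
    rw [step_plus_iff] at ht
    rcases ht with ht | ht
    · obtain ⟨u, hu⟩ := (h₁.canStep_iff μ).2 ⟨_, ht⟩; exact ⟨u, .plusL hu⟩
    · obtain ⟨u, hu⟩ := (h₂.canStep_iff μ).2 ⟨_, ht⟩; exact ⟨u, .plusR hu⟩

lemma RSleq.par_cong {p q p' q' : Tm A} (h₁ : RSleq p q) (h₂ : RSleq p' q') :
    RSleq (Tm.par p p') (Tm.par q q') := by
  refine RSleq.coind
    (fun x y => ∃ a b c d, x = Tm.par a b ∧ y = Tm.par c d ∧ RSleq a c ∧ RSleq b d)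
    ?_ _ _ ⟨p, p', q, q', rfl, rfl, h₁, h₂⟩
  rintro x y ⟨a, b, c, d, rfl, rfl, hac, hbd⟩
  constructor
  · rintro μ x' hs
    rw [step_par_iff] at hs
    rcases hs with ⟨a', ha', rfl⟩ | ⟨b', hb', rfl⟩ | ⟨rfl, α, a', b', hα, ha', hb', rfl⟩
    · obtain ⟨c', hc', h'⟩ := hac.step ha'
      exact ⟨Tm.par c' d, .parL hc', Or.inl ⟨a', b, c', d, rfl, rfl, h', hbd⟩⟩
    · obtain ⟨d', hd', h'⟩ := hbd.step hb'
      exact ⟨Tm.par c d', .parR hd', Or.inl ⟨a, b', c, d', rfl, rfl, hac, h'⟩⟩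
    · obtain ⟨c', hc', h1'⟩ := hac.step ha'
      obtain ⟨d', hd', h2'⟩ := hbd.step hb'
      exact ⟨Tm.par c' d', .comm hα hc' hd',
        Or.inl ⟨a', b', c', d', rfl, rfl, h1', h2'⟩⟩
  · rintro μ ⟨y', hy'⟩
    rw [step_par_iff] at hy'
    rcases hy' with ⟨c', hc', rfl⟩ | ⟨d', hd', rfl⟩ | ⟨rfl, α, c', d', hα, hc', hd', rfl⟩
    · obtain ⟨a', ha'⟩ := (hac.canStep_iff μ).2 ⟨_, hc'⟩
      exact ⟨_, .parL (u := b) ha'⟩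
    · obtain ⟨b', hb'⟩ := (hbd.canStep_iff μ).2 ⟨_, hd'⟩
      exact ⟨_, .parR (t := a) hb'⟩
    · obtain ⟨a', ha'⟩ := (hac.canStep_iff α).2 ⟨_, hc'⟩
      obtain ⟨b', hb'⟩ := (hbd.canStep_iff α.co).2 ⟨_, hd'⟩
      exact ⟨_, .comm hα ha' hb'⟩

lemma RSEq.rfl (p : Tm A) : RSEq p p := ⟨RSleq.refl p, RSleq.refl p⟩

lemma RSEq.symm' {p q : Tm A} (h : RSEq p q) : RSEq q p := ⟨h.2, h.1⟩

lemma RSEq.trans' {p q r : Tm A} (h₁ : RSEq p q) (h₂ : RSEq q r) : RSEq p r :=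
  ⟨RSleq.trans h₁.1 h₂.1, RSleq.trans h₂.2 h₁.2⟩

lemma RSEq.pre_cong (μ : Act A) {p q : Tm A} (h : RSEq p q) :
    RSEq (Tm.pre μ p) (Tm.pre μ q) :=
  ⟨RSleq.pre_cong μ h.1, RSleq.pre_cong μ h.2⟩

lemma RSEq.plus_cong {p q p' q' : Tm A} (h₁ : RSEq p q) (h₂ : RSEq p' q') :
    RSEq (Tm.plus p p') (Tm.plus q q') :=
  ⟨RSleq.plus_cong h₁.1 h₂.1, RSleq.plus_cong h₁.2 h₂.2⟩

lemma RSEq.par_cong {p q p' q' : Tm A} (h₁ : RSEq p q) (h₂ : RSEq p' q') :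
    RSEq (Tm.par p p') (Tm.par q q') :=
  ⟨RSleq.par_cong h₁.1 h₂.1, RSleq.par_cong h₁.2 h₂.2⟩

end RSproof

namespace RSproof
open Tm Act

variable {A : Type}

/-! ### Sums of prefixes -/

def SOP : Tm A → Prop
  | .nil => True
  | .var _ => False
  | .pre _ t => SOP t
  | .plus t u => SOP t ∧ SOP u
  | .par _ _ => False

def summ : Tm A → List (Act A × Tm A)
  | .nil => []
  | .var _ => []
  | .pre μ t => [(μ, t)]
  | .plus t u => summ t ++ summ u
  | .par _ _ => []

def sumP (L : List (Act A × Tm A)) : Tm A :=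
  listSum (L.map fun x => Tm.pre x.1 x.2)

lemma SOP.closed {t : Tm A} (h : SOP t) : Closed t := by
  induction t with
  | nil => trivial
  | var n => exact h.elim
  | pre μ t ih => exact ih h
  | plus t u iht ihu => exact ⟨iht h.1, ihu h.2⟩
  | par t u _ _ => exact h.elim

lemma SOP.summ_mem {t : Tm A} (h : SOP t) {x : Act A × Tm A} (hx : x ∈ summ t) :
    SOP x.2 := by
  induction t with
  | nil => simp [summ] at hx
  | var n => exact h.elim
  | pre μ t ih => simp [summ] at hx; subst hx; exact h
  | plus t u iht ihu =>
    simp [summ] at hx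
    rcases hx with hx | hx
    exacts [iht h.1 hx, ihu h.2 hx]
  | par t u _ _ => exact h.elim

lemma step_sop {t : Tm A} (h : SOP t) {μ : Act A} {t' : Tm A} :
    Step t μ t' ↔ (μ, t') ∈ summ t := by
  induction t with
  | nil => simp [summ]; exact step_nil
  | var n => exact h.elim
  | pre ν u ih => simp [summ, step_pre_iff]
  | plus a b iha ihb =>
    simp [summ, step_plus_iff, iha h.1, ihb h.2]
  | par a b _ _ => exact h.elim

lemma depth_summand {t : Tm A} {x : Act A × Tm A} (hx : x ∈ summ t) :
    depth x.2 + 1 ≤ depth t := by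
  induction t with
  | nil => simp [summ] at hx
  | var n => simp [summ] at hx
  | pre μ u ih => simp [summ] at hx; subst hx; simp [depth]
  | plus a b iha ihb =>
    simp [summ] at hx
    rcases hx with hx | hx
    · exact le_trans (iha hx) (le_max_left _ _)
    · exact le_trans (ihb hx) (le_max_right _ _)
  | par a b _ _ => simp [summ] at hx

lemma summ_listSum (l : List (Tm A)) : summ (listSum l) = l.flatMap summ := by
  induction l with
  | nil => rfl
  | cons x xs ih =>
    cases xs with
    | nil => simp [listSum, List.flatMap]
    | cons y ys => simp [listSum, summ, List.flatMap] at ih ⊢; rw [ih]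

lemma SOP_listSum {l : List (Tm A)} (h : ∀ t ∈ l, SOP t) : SOP (listSum l) := by
  induction l with
  | nil => trivial
  | cons x xs ih =>
    cases xs with
    | nil => exact h x (by simp)
    | cons y ys =>
      exact ⟨h x (by simp), ih (fun t ht => h t (List.mem_cons_of_mem _ ht))⟩

lemma summ_sumP (L : List (Act A × Tm A)) : summ (sumP L) = L := by
  rw [sumP, summ_listSum]
  induction L with
  | nil => rfl
  | cons x xs ih => simp [List.flatMap, summ] at ih ⊢; exact ih

lemma SOP_sumP {L : List (Act A × Tm A)} (h : ∀ x ∈ L, SOP x.2) : SOP (sumP L) := by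
  apply SOP_listSum
  intro t ht
  simp only [List.mem_map] at ht
  obtain ⟨x, hx, rfl⟩ := ht
  exact h x hx

lemma depth_listSum {l : List (Tm A)} {c : ℕ} (h : ∀ t ∈ l, depth t ≤ c) :
    depth (listSum l) ≤ c := by
  induction l with
  | nil => simp [listSum, depth]
  | cons x xs ih =>
    cases xs with
    | nil => exact h x (by simp)
    | cons y ys =>
      simp only [listSum, depth, max_le_iff]
      exact ⟨h x (by simp), ih (fun t ht => h t (List.mem_cons_of_mem _ ht))⟩

lemma depth_sumP {L : List (Act A × Tm A)} {c : ℕ}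
    (h : ∀ x ∈ L, depth x.2 + 1 ≤ c) : depth (sumP L) ≤ c := by
  apply depth_listSum
  intro t ht
  simp only [List.mem_map] at ht
  obtain ⟨x, hx, rfl⟩ := ht
  exact h x hx

end RSproof

namespace RSproof
open Tm Act

variable {A : Type} [DecidableEq A]

/-! ### Derived equations -/

abbrev ERS (A : Type) [DecidableEq A] : Set (Eqn A) :=
  E1 A ∪ RS A ∪ RSP1 A ∪ RSP2 A ∪ EL2 A

lemma memE1 {e : Eqn A} (h : e ∈ E1 A) : e ∈ ERS A :=
  Or.inl (Or.inl (Or.inl (Or.inl h)))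

lemma memRS {e : Eqn A} (h : e ∈ RS A) : e ∈ ERS A :=
  Or.inl (Or.inl (Or.inl (Or.inr h)))

lemma memRSP1 {e : Eqn A} (h : e ∈ RSP1 A) : e ∈ ERS A :=
  Or.inl (Or.inl (Or.inr h))

lemma memRSP2 {e : Eqn A} (h : e ∈ RSP2 A) : e ∈ ERS A :=
  Or.inl (Or.inr h)

lemma memEL2 {e : Eqn A} (h : e ∈ EL2 A) : e ∈ ERS A := Or.inr h

def sub3 (a b c : Tm A) : ℕ → Tm A :=
  fun n => if n = 0 then a else if n = 1 then b else if n = 2 then c else .nil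

lemma dplus0 (t : Tm A) : Deriv (ERS A) (.plus t .nil) t := by
  have := Deriv.ax (E := ERS A) (sub3 t .nil .nil)
    (memE1 (Or.inl (by left; rfl)))
  simpa [subst, sub3] using this

lemma dcomm (a b : Tm A) : Deriv (ERS A) (.plus a b) (.plus b a) := by
  have := Deriv.ax (E := ERS A) (sub3 a b .nil)
    (memE1 (Or.inl (by right; left; rfl)))
  simpa [subst, sub3] using this

lemma dassoc (a b c : Tm A) :
    Deriv (ERS A) (.plus (.plus a b) c) (.plus a (.plus b c)) := by
  have := Deriv.ax (E := ERS A) (sub3 a b c)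
    (memE1 (Or.inl (by right; right; left; rfl)))
  simpa [subst, sub3] using this

lemma didem (a : Tm A) : Deriv (ERS A) (.plus a a) a := by
  have := Deriv.ax (E := ERS A) (sub3 a .nil .nil)
    (memE1 (Or.inl (by right; right; right; rfl)))
  simpa [subst, sub3] using this

lemma dpar0 (t : Tm A) : Deriv (ERS A) (.par t .nil) t := by
  have := Deriv.ax (E := ERS A) (sub3 t .nil .nil)
    (memE1 (Or.inr (by left; rfl)))
  simpa [subst, sub3] using this

lemma dparC (a b : Tm A) : Deriv (ERS A) (.par a b) (.par b a) := by
  have := Deriv.ax (E := ERS A) (sub3 a b .nil)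
    (memE1 (Or.inr (by right; rfl)))
  simpa [subst, sub3] using this

lemma dabsorb_of_mem {t : Tm A} (ht : SOP t) {x : Act A × Tm A}
    (hx : x ∈ summ t) : Deriv (ERS A) t (.plus t (.pre x.1 x.2)) := by
  induction t with
  | nil => simp [summ] at hx
  | var n => exact ht.elim
  | pre ν u ih =>
    simp [summ] at hx
    subst hx
    exact Deriv.symm (didem _)
  | plus a b iha ihb =>
    simp [summ] at hx
    rcases hx with hx | hx
    · refine Deriv.trans (Deriv.plus (iha ht.1 hx) (Deriv.refl b)) ?_
      refine Deriv.trans (dassoc _ _ _) ?_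
      refine Deriv.trans (Deriv.plus (Deriv.refl a) (dcomm _ _)) ?_
      exact Deriv.symm (dassoc _ _ _)
    · refine Deriv.trans (Deriv.plus (Deriv.refl a) (ihb ht.2 hx)) ?_
      exact Deriv.symm (dassoc _ _ _)
  | par a b _ _ => exact ht.elim

lemma djoin {t a b : Tm A} (h₁ : Deriv (ERS A) t (.plus t a))
    (h₂ : Deriv (ERS A) t (.plus t b)) : Deriv (ERS A) t (.plus t (.plus a b)) := by
  refine Deriv.trans h₁ ?_
  refine Deriv.trans (Deriv.plus h₂ (Deriv.refl a)) ?_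
  refine Deriv.trans (dassoc _ _ _) ?_
  exact Deriv.plus (Deriv.refl t) (dcomm _ _)

lemma dchain {t s s' : Tm A} (h₁ : Deriv (ERS A) t (.plus t s))
    (h₂ : Deriv (ERS A) s (.plus s s')) : Deriv (ERS A) t (.plus t s') := by
  refine Deriv.trans h₁ ?_
  refine Deriv.trans (Deriv.plus (Deriv.refl t) h₂) ?_
  refine Deriv.trans (Deriv.symm (dassoc _ _ _)) ?_
  exact Deriv.plus (Deriv.symm h₁) (Deriv.refl s')

lemma dabsorb_subset {t s : Tm A} (ht : SOP t) (hs : SOP s)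
    (h : ∀ x ∈ summ s, x ∈ summ t) : Deriv (ERS A) t (.plus t s) := by
  induction s with
  | nil => exact Deriv.symm (dplus0 t)
  | var n => exact hs.elim
  | pre ν u _ => exact dabsorb_of_mem ht (h (ν, u) (by simp [summ]))
  | plus a b iha ihb =>
    refine djoin (iha hs.1 fun x hx => h x ?_) (ihb hs.2 fun x hx => h x ?_) <;>
      simp [summ, hx]
  | par a b _ _ => exact hs.elim

lemma drearrange {t s : Tm A} (ht : SOP t) (hs : SOP s)
    (h : ∀ x, x ∈ summ t ↔ x ∈ summ s) : Deriv (ERS A) t s := by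
  have h₁ := dabsorb_subset ht hs (fun x hx => (h x).2 hx)
  have h₂ := dabsorb_subset hs ht (fun x hx => (h x).1 hx)
  exact Deriv.trans (Deriv.trans h₁ (dcomm _ _)) (Deriv.symm h₂)

lemma drearrange_perm {t s : Tm A} (ht : SOP t) (hs : SOP s)
    (h : (summ t).Perm (summ s)) : Deriv (ERS A) t s :=
  drearrange ht hs fun x => h.mem_iff

lemma dsumP (t : Tm A) (ht : SOP t) : Deriv (ERS A) t (sumP (summ t)) := by
  refine drearrange ht (SOP_sumP fun x hx => ht.summ_mem hx) ?_
  simp [summ_sumP]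

lemma dlistSum_cong {α : Type} {l : List α} {g h : α → Tm A}
    (hgh : ∀ x ∈ l, Deriv (ERS A) (g x) (h x)) :
    Deriv (ERS A) (listSum (l.map g)) (listSum (l.map h)) := by
  induction l with
  | nil => exact Deriv.refl _
  | cons x xs ih =>
    cases xs with
    | nil => exact hgh x (by simp)
    | cons y ys =>
      exact Deriv.plus (hgh x (by simp))
        (ih fun z hz => hgh z (List.mem_cons_of_mem _ hz))

end RSproof

namespace RSproof
open Tm Act

variable {A : Type} [DecidableEq A]

lemma perm_of_mem {α : Type} {x : α} {L : List α} (h : x ∈ L) :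
    ∃ M, L.Perm (x :: M) ∧ M.length + 1 = L.length ∧ ∀ y ∈ L, y ≠ x → y ∈ M := by
  obtain ⟨s, t, rfl⟩ := List.append_of_mem h
  refine ⟨s ++ t, List.perm_middle, by simp; omega, ?_⟩
  intro y hy hne
  simp only [List.mem_append, List.mem_cons] at hy ⊢
  tauto

/-- The RS-deletion lemma: under a prefix, a sum may absorb any sub-sum
covering all its actions. -/
lemma ddel : ∀ (n : ℕ) (L L' : List (Act A × Tm A)), L.length ≤ n →
    (∀ x ∈ L, SOP x.2) → (∀ x ∈ L', x ∈ L) → (∀ x ∈ L, ∃ y ∈ L', y.1 = x.1) →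
    ∀ μ, Deriv (ERS A) (.pre μ (sumP L))
      (.plus (.pre μ (sumP L)) (.pre μ (sumP L'))) := by
  intro n
  induction n with
  | zero =>
    intro L L' hlen hsop hsub hcov μ
    have hL : L = [] := List.length_eq_zero_iff.1 (Nat.le_zero.1 hlen)
    subst hL
    have hL' : L' = [] := by
      cases L' with
      | nil => rfl
      | cons z zs => exact absurd (hsub z (by simp)) (by simp)
    subst hL'
    exact Deriv.symm (didem _)
  | succ n ih =>
    intro L L' hlen hsop hsub hcov μ
    by_cases hall : ∀ x ∈ L, x ∈ L'
    · refine Deriv.trans (Deriv.symm (didem (Tm.pre μ (sumP L)))) ?_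
      refine Deriv.plus (Deriv.refl _) (Deriv.pre μ ?_)
      refine drearrange (SOP_sumP hsop) (SOP_sumP fun x hx => hsop x (hsub x hx)) ?_
      intro x
      simp only [summ_sumP]
      exact ⟨fun hx => hall x hx, fun hx => hsub x hx⟩
    · push_neg at hall
      obtain ⟨x, hxL, hxL'⟩ := hall
      obtain ⟨y, hyL', hyx⟩ := hcov x hxL
      have hyL : y ∈ L := hsub y hyL'
      have hyne : y ≠ x := fun h => hxL' (h ▸ hyL')
      obtain ⟨M, hperm, hMlen, hMmem⟩ := perm_of_mem hxL
      have hyM : y ∈ M := hMmem y hyL hyne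
      obtain ⟨N, hperm2, -, -⟩ := perm_of_mem hyM
      -- L ~ x :: M ~ x :: y :: N ~ y :: x :: N
      have hLperm : L.Perm (y :: x :: N) :=
        (hperm.trans (List.Perm.cons x hperm2)).trans (List.Perm.swap _ _ _)
      have hsopM : ∀ z ∈ M, SOP z.2 := fun z hz =>
        hsop z (hperm.symm.subset (List.mem_cons_of_mem _ hz))
      have hsopN : ∀ z ∈ N, SOP z.2 := fun z hz =>
        hsopM z (hperm2.symm.subset (List.mem_cons_of_mem _ hz))
      have hy' : ((x.1 : Act A), y.2) = y := by rw [← hyx]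
      have hsopw : SOP (Tm.plus (.plus (.pre x.1 y.2) (.pre x.1 x.2)) (sumP N)) :=
        ⟨⟨hsop y hyL, hsop x hxL⟩, SOP_sumP hsopN⟩
      have h₁ : Deriv (ERS A) (Tm.pre μ (sumP L))
          (Tm.pre μ (.plus (.plus (.pre x.1 y.2) (.pre x.1 x.2)) (sumP N))) := by
        refine Deriv.pre μ (drearrange (SOP_sumP hsop) hsopw ?_)
        intro z
        simp only [summ_sumP, summ, List.mem_append, List.mem_singleton,
          List.mem_cons, hy', Prod.mk.eta, hLperm.mem_iff]
        tauto
      -- apply the RS axiom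
      have hax : Deriv (ERS A)
          (Tm.pre μ (.plus (.plus (.pre x.1 y.2) (.pre x.1 x.2)) (sumP N)))
          (.plus (.pre μ (.plus (.plus (.pre x.1 y.2) (.pre x.1 x.2)) (sumP N)))
            (.pre μ (.plus (.pre x.1 y.2) (sumP N)))) := by
        have := Deriv.ax (E := ERS A) (sub3 y.2 x.2 (sumP N))
          (memRS ⟨μ, x.1, rfl⟩)
        simpa [subst, sub3] using this
      -- `(ν.y.2 + sumP N)` rearranges to `sumP M`
      have h₂ : Deriv (ERS A) (Tm.pre μ (.plus (.pre x.1 y.2) (sumP N)))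
          (Tm.pre μ (sumP M)) := by
        refine Deriv.pre μ (drearrange ⟨hsop y hyL, SOP_sumP hsopN⟩
          (SOP_sumP hsopM) ?_)
        intro z
        simp only [summ_sumP, summ, List.mem_append, List.mem_singleton,
          List.mem_cons, hy', Prod.mk.eta, hperm2.mem_iff]
        tauto
      have hstep : Deriv (ERS A) (Tm.pre μ (sumP L))
          (.plus (.pre μ (sumP L)) (.pre μ (sumP M))) := by
        refine Deriv.trans h₁ ?_
        refine Deriv.trans hax ?_
        exact Deriv.plus (Deriv.symm h₁) h₂
      have hsubM : ∀ z ∈ L', z ∈ M := fun z hz =>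
        hMmem z (hsub z hz) (fun h => hxL' (h ▸ hz))
      have hcovM : ∀ z ∈ M, ∃ y' ∈ L', y'.1 = z.1 := fun z hz =>
        hcov z (hperm.symm.subset (List.mem_cons_of_mem _ hz))
      have hih := ih M L' (by omega) hsopM hsubM hcovM μ
      exact dchain hstep hih
  
end RSproof

namespace RSproof
open Tm Act

variable {A : Type} [DecidableEq A]

lemma dchain' {a b c : Tm A} (h₁ : Deriv (ERS A) a b)
    (h₂ : Deriv (ERS A) b (.plus b c)) : Deriv (ERS A) a (.plus a c) :=
  Deriv.trans (Deriv.trans h₁ h₂) (Deriv.plus (Deriv.symm h₁) (Deriv.refl c))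

/-! ### Ground-completeness over sums of prefixes -/

lemma keyB : ∀ (d : ℕ) (p q : Tm A), SOP p → SOP q → RSleq p q →
    depth p + depth q ≤ d → ∀ μ,
    Deriv (ERS A) (.pre μ q) (.plus (.pre μ q) (.pre μ p)) := by
  intro d
  induction d using Nat.strong_induction_on with
  | _ d ih =>
  intro p q hp hq hpq hd μ
  -- choose matching summands in q for the summands of p
  have hex : ∀ x : Act A × Tm A, ∃ y : Act A × Tm A, x ∈ summ p →
      y ∈ summ q ∧ y.1 = x.1 ∧ RSleq x.2 y.2 := by
    intro x
    by_cases hx : x ∈ summ p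
    · obtain ⟨q', hq', h'⟩ := hpq.step ((step_sop hp).2 hx)
      exact ⟨(x.1, q'), fun _ => ⟨(step_sop hq).1 hq', rfl, h'⟩⟩
    · exact ⟨x, fun h => absurd h hx⟩
  choose f hf using hex
  have hrq : ∀ z ∈ (summ p).map f, z ∈ summ q := by
    rintro z hz
    rw [List.mem_map] at hz
    obtain ⟨x, hx, rfl⟩ := hz
    exact (hf x hx).1
  have hsopp : ∀ z ∈ summ p, SOP z.2 := fun z hz => hp.summ_mem hz
  have hsopq : ∀ z ∈ summ q, SOP z.2 := fun z hz => hq.summ_mem hz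
  have hsopr : ∀ z ∈ (summ p).map f, SOP z.2 := fun z hz => hq.summ_mem (hrq z hz)
  -- Step 1: μ.(sum of q) absorbs μ.(sumP r)
  have hcov : ∀ z ∈ summ q, ∃ y ∈ (summ p).map f, y.1 = z.1 := by
    intro z hz
    have : canStep p z.1 := (hpq.canStep_iff z.1).2 ⟨z.2, (step_sop hq).2 hz⟩
    obtain ⟨p', hp'⟩ := this
    have hmem : (z.1, p') ∈ summ p := (step_sop hp).1 hp'
    exact ⟨f (z.1, p'), List.mem_map_of_mem (f := f) hmem, by rw [(hf _ hmem).2.1]⟩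
  have hq_sum : Deriv (ERS A) (Tm.pre μ q) (Tm.pre μ (sumP (summ q))) :=
    Deriv.pre μ (dsumP q hq)
  have step1 : Deriv (ERS A) (Tm.pre μ (sumP (summ q)))
      (.plus (.pre μ (sumP (summ q))) (.pre μ (sumP ((summ p).map f)))) :=
    ddel (summ q).length _ _ le_rfl hsopq hrq hcov μ
  -- Step 2: sumP r is provably the interleaved sum, by the inductive hypothesis
  have step2 : Deriv (ERS A) (sumP ((summ p).map f))
      (listSum ((summ p).map fun x =>
        Tm.plus (.pre x.1 (f x).2) (.pre x.1 x.2))) := by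
    rw [sumP, List.map_map]
    refine dlistSum_cong fun x hx => ?_
    have hfx := hf x hx
    have hdx := depth_summand hx
    have hdfx := depth_summand hfx.1
    have hIH := ih (depth x.2 + depth (f x).2) (by omega) x.2 (f x).2
      (hsopp x hx) (hq.summ_mem hfx.1) hfx.2.2 le_rfl x.1
    simp only [Function.comp]
    rw [hfx.2.1]
    exact hIH
  -- Step 3: the interleaved sum rearranges to `sumP (r ++ summ p)`
  have step3 : Deriv (ERS A)
      (listSum ((summ p).map fun x =>
        Tm.plus (.pre x.1 (f x).2) (.pre x.1 x.2)))
      (sumP ((summ p).map f ++ summ p)) := by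
    refine drearrange ?_ ?_ ?_
    · apply SOP_listSum
      intro t ht
      rw [List.mem_map] at ht
      obtain ⟨x, hx, rfl⟩ := ht
      exact ⟨hq.summ_mem (hf x hx).1, hsopp x hx⟩
    · refine SOP_sumP ?_
      intro z hz
      rw [List.mem_append] at hz
      rcases hz with hz | hz
      exacts [hsopr z hz, hsopp z hz]
    · intro z
      rw [summ_listSum, summ_sumP]
      constructor
      · intro hz
        rw [List.mem_flatMap] at hz
        obtain ⟨t, ht, hzt⟩ := hz
        rw [List.mem_map] at ht
        obtain ⟨x, hx, rfl⟩ := ht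
        simp only [summ, List.mem_append, List.mem_cons,
          List.not_mem_nil, or_false, List.mem_singleton] at hzt
        rcases hzt with rfl | rfl
        · refine List.mem_append.2 (Or.inl ?_)
          have : ((x.1 : Act A), (f x).2) = f x :=
            Prod.ext ((hf x hx).2.1).symm rfl
          rw [this]
          exact List.mem_map_of_mem (f := f) hx
        · exact List.mem_append.2 (Or.inr (by simpa using hx))
      · intro hz
        rw [List.mem_append] at hz
        rw [List.mem_flatMap]
        rcases hz with hz | hz
        · rw [List.mem_map] at hz
          obtain ⟨x, hx, rfl⟩ := hz
          refine ⟨_, List.mem_map_of_mem hx, ?_⟩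
          simp only [summ, List.mem_append, List.mem_singleton]
          left
          exact Prod.ext ((hf x hx).2.1) rfl
        · refine ⟨_, List.mem_map_of_mem hz, ?_⟩
          simp [summ]
  -- Step 4 : deletion down to `sumP (summ p)`
  have step4 : Deriv (ERS A) (Tm.pre μ (sumP ((summ p).map f ++ summ p)))
      (.plus (.pre μ (sumP ((summ p).map f ++ summ p)))
        (.pre μ (sumP (summ p)))) := by
    refine ddel ((summ p).map f ++ summ p).length _ _ le_rfl ?_ ?_ ?_ μ
    · intro z hz
      rw [List.mem_append] at hz
      rcases hz with hz | hz
      exacts [hsopr z hz, hsopp z hz]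
    · intro z hz
      exact List.mem_append.2 (Or.inr hz)
    · intro z hz
      rw [List.mem_append] at hz
      rcases hz with hz | hz
      · rw [List.mem_map] at hz
        obtain ⟨x, hx, rfl⟩ := hz
        exact ⟨x, hx, ((hf x hx).2.1).symm ▸ rfl⟩
      · exact ⟨z, hz, rfl⟩
  -- assemble
  have hr_abs : Deriv (ERS A) (Tm.pre μ (sumP ((summ p).map f)))
      (.plus (.pre μ (sumP ((summ p).map f))) (.pre μ (sumP (summ p)))) :=
    dchain' (Deriv.trans (Deriv.pre μ step2) (Deriv.pre μ step3)) step4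
  have h5 : Deriv (ERS A) (Tm.pre μ (sumP (summ q)))
      (.plus (.pre μ (sumP (summ q))) (.pre μ (sumP (summ p)))) :=
    dchain step1 hr_abs
  have h6 : Deriv (ERS A) (Tm.pre μ q)
      (.plus (.pre μ q) (.pre μ (sumP (summ p)))) := dchain' hq_sum h5
  refine Deriv.trans h6 (Deriv.plus (Deriv.refl _) ?_)
  exact Deriv.pre μ (Deriv.symm (dsumP p hp))

lemma keyA {p q : Tm A} (hp : SOP p) (hq : SOP q) (hpq : RSleq p q) :
    Deriv (ERS A) q (.plus q p) := by
  have aux : ∀ p₀ : Tm A, SOP p₀ → (∀ x ∈ summ p₀, x ∈ summ p) →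
      Deriv (ERS A) q (.plus q p₀) := by
    intro p₀
    induction p₀ with
    | nil => intro _ _; exact Deriv.symm (dplus0 q)
    | var n => intro h _; exact h.elim
    | pre β t ihs =>
      intro hsop hmem
      have hx : (β, t) ∈ summ p := hmem (β, t) (by simp [summ])
      obtain ⟨q', hq', h'⟩ := hpq.step ((step_sop hp).2 hx)
      have habs : Deriv (ERS A) q (.plus q (.pre β q')) :=
        dabsorb_of_mem hq ((step_sop hq).1 hq')
      have hkb := keyB (depth t + depth q') t q' hsop (hq.summ_mem
        ((step_sop hq).1 hq')) h' le_rfl β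
      exact dchain habs hkb
    | plus a b iha ihb =>
      intro hsop hmem
      exact djoin (iha hsop.1 fun x hx => hmem x (by simp [summ, hx]))
        (ihb hsop.2 fun x hx => hmem x (by simp [summ, hx]))
    | par a b _ _ => intro h _; exact h.elim
  exact aux p hp (fun x hx => hx)

lemma tree_complete {p q : Tm A} (hp : SOP p) (hq : SOP q)
    (h₁ : RSleq p q) (h₂ : RSleq q p) : Deriv (ERS A) p q := by
  have ha := keyA hq hp h₂   -- p ≈ p + q
  have hb := keyA hp hq h₁   -- q ≈ q + p
  refine Deriv.trans ha (Deriv.trans (dcomm _ _) (Deriv.symm hb))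

end RSproof

namespace RSproof
open Tm Act

variable {A : Type} [DecidableEq A]

/-! ### Steps of list sums, substitution lemmas -/

lemma step_listSum {l : List (Tm A)} {γ : Act A} {t : Tm A} :
    Step (listSum l) γ t ↔ ∃ s ∈ l, Step s γ t := by
  induction l with
  | nil =>
    simp only [listSum, List.mem_nil_iff, false_and, exists_false, iff_false]
    exact step_nil
  | cons x xs ih =>
    cases xs with
    | nil =>
      simp only [listSum, List.mem_singleton]
      constructor
      · intro h; exact ⟨x, rfl, h⟩
      · rintro ⟨s, rfl, h⟩; exact h
    | cons y ys =>
      simp only [listSum, step_plus_iff, ih, List.mem_cons]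
      constructor
      · rintro (h | ⟨s, hs, h⟩)
        · exact ⟨x, Or.inl rfl, h⟩
        · exact ⟨s, Or.inr hs, h⟩
      · rintro ⟨s, rfl | hs, h⟩
        · exact Or.inl h
        · exact Or.inr ⟨s, hs, h⟩

lemma step_sumP {K : List (Act A × Tm A)} {γ : Act A} {t : Tm A} :
    Step (sumP K) γ t ↔ (γ, t) ∈ K := by
  rw [sumP, step_listSum]
  constructor
  · rintro ⟨s, hs, h⟩
    rw [List.mem_map] at hs
    obtain ⟨k, hk, rfl⟩ := hs
    rw [step_pre_iff] at h
    obtain ⟨rfl, rfl⟩ := h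
    simpa using hk
  · intro h
    exact ⟨.pre γ t, List.mem_map_of_mem h, .pre γ t⟩

lemma subst_listSum (σ : ℕ → Tm A) (l : List (Tm A)) :
    subst σ (listSum l) = listSum (l.map (subst σ)) := by
  induction l with
  | nil => rfl
  | cons x xs ih =>
    cases xs with
    | nil => rfl
    | cons y ys => simp only [listSum, subst, List.map] at ih ⊢; rw [← ih]

lemma subst_prefixed (σ : ℕ → Tm A) (I : List (Act A × ℕ)) :
    subst σ (prefixed I) = sumP (I.map fun p => (p.1, σ p.2)) := by
  rw [prefixed, subst_listSum, sumP, List.map_map, List.map_map]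
  rfl

/-! ### Further `RSleq` lemmas -/

lemma RSleq_plus_lub {x y r : Tm A} (h₁ : RSleq x r) (h₂ : RSleq y r) :
    RSleq (.plus x y) r := by
  refine RSleq.mk' ?_ ?_
  · intro μ t ht
    rw [step_plus_iff] at ht
    rcases ht with ht | ht
    exacts [h₁.step ht, h₂.step ht]
  · intro μ hμ
    obtain ⟨t, ht⟩ := (h₁.canStep_iff μ).2 hμ
    exact ⟨t, .plusL ht⟩

/-! ### Soundness of the axioms of `E₁` -/

lemma RSEq_plus_nil (t : Tm A) : RSEq (.plus t .nil) t := by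
  refine RSEq.of_steps_eq fun μ s => ?_
  rw [step_plus_iff]
  exact ⟨fun h => h.elim id (fun h => absurd h step_nil), Or.inl⟩

lemma RSEq_plus_comm (a b : Tm A) : RSEq (.plus a b) (.plus b a) := by
  refine RSEq.of_steps_eq fun μ s => ?_
  simp only [step_plus_iff]
  tauto

lemma RSEq_plus_assoc (a b c : Tm A) :
    RSEq (.plus (.plus a b) c) (.plus a (.plus b c)) := by
  refine RSEq.of_steps_eq fun μ s => ?_
  simp only [step_plus_iff]
  tauto

lemma RSEq_plus_idem (a : Tm A) : RSEq (.plus a a) a := by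
  refine RSEq.of_steps_eq fun μ s => ?_
  simp only [step_plus_iff]
  tauto

lemma RSEq_par_nil (t : Tm A) : RSEq (.par t .nil) t := by
  constructor
  · refine RSleq.coind (fun x y => x = Tm.par y .nil) ?_ _ _ rfl
    rintro x y rfl
    constructor
    · intro μ x' hx
      rw [step_par_iff] at hx
      rcases hx with ⟨a', h, rfl⟩ | ⟨b', h, rfl⟩ | ⟨rfl, α, a', b', hα, h₁, h₂, rfl⟩
      · exact ⟨a', h, Or.inl rfl⟩
      · exact absurd h step_nil
      · exact absurd h₂ step_nil
    · rintro μ ⟨y', hy⟩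
      exact ⟨.par y' .nil, .parL hy⟩
  · refine RSleq.coind (fun x y => y = Tm.par x .nil) ?_ _ _ rfl
    rintro x y rfl
    constructor
    · intro μ x' hx
      exact ⟨.par x' .nil, .parL hx, Or.inl rfl⟩
    · rintro μ ⟨y', hy⟩
      rw [step_par_iff] at hy
      rcases hy with ⟨a', h, _⟩ | ⟨b', h, _⟩ | ⟨_, α, a', b', hα, h₁, h₂, _⟩
      · exact ⟨a', h⟩
      · exact absurd h step_nil
      · exact absurd h₂ step_nil

lemma RSleq_par_swap (a b : Tm A) : RSleq (.par a b) (.par b a) := by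
  refine RSleq.coind (fun x y => ∃ c d, x = Tm.par c d ∧ y = Tm.par d c) ?_ _ _
    ⟨a, b, rfl, rfl⟩
  rintro x y ⟨c, d, rfl, rfl⟩
  constructor
  · intro μ x' hx
    rw [step_par_iff] at hx
    rcases hx with ⟨c', h, rfl⟩ | ⟨d', h, rfl⟩ | ⟨rfl, α, c', d', hα, h₁, h₂, rfl⟩
    · exact ⟨.par d c', .parR h, Or.inl ⟨c', d, rfl, rfl⟩⟩
    · exact ⟨.par d' c, .parL h, Or.inl ⟨c, d', rfl, rfl⟩⟩
    · refine ⟨.par d' c', .comm (co_ne_tau hα) h₂ ?_, Or.inl ⟨c', d', rfl, rfl⟩⟩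
      rw [co_co]
      exact h₁
  · rintro μ ⟨y', hy⟩
    rw [step_par_iff] at hy
    rcases hy with ⟨d', h, _⟩ | ⟨c', h, _⟩ | ⟨rfl, α, d', c', hα, h₁, h₂, _⟩
    · exact ⟨.par c d', .parR h⟩
    · exact ⟨.par c' d, .parL h⟩
    · refine ⟨.par c' d', .comm (co_ne_tau hα) h₂ ?_⟩
      rw [co_co]
      exact h₁

lemma RSEq_par_comm (a b : Tm A) : RSEq (.par a b) (.par b a) :=
  ⟨RSleq_par_swap a b, RSleq_par_swap b a⟩

end RSproof

namespace RSproof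
open Tm Act

variable {A : Type} [DecidableEq A]

/-! ### Soundness of RS -/

lemma RSEq_RS (μ ν : Act A) (a b c : Tm A) :
    RSEq (.pre μ (.plus (.plus (.pre ν a) (.pre ν b)) c))
      (.plus (.pre μ (.plus (.plus (.pre ν a) (.pre ν b)) c))
        (.pre μ (.plus (.pre ν a) c))) := by
  have hYX : RSleq (Tm.plus (.pre ν a) c) (.plus (.plus (.pre ν a) (.pre ν b)) c) := by
    refine RSleq.of_subset ?_ ?_
    · intro γ t h
      simp only [step_plus_iff, step_pre_iff] at h ⊢
      tauto
    · rintro γ ⟨t, ht⟩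
      rcases step_plus_iff.1 ht with ht | ht
      · rcases step_plus_iff.1 ht with ht | ht <;>
        · obtain ⟨rfl, rfl⟩ := step_pre_iff.1 ht
          exact ⟨_, .plusL (.pre _ _)⟩
      · exact ⟨t, .plusR ht⟩
  constructor
  · refine RSleq.of_subset (fun γ t h => .plusL h) ?_
    rintro γ ⟨t, ht⟩
    rcases step_plus_iff.1 ht with ht | ht <;>
      obtain ⟨rfl, rfl⟩ := step_pre_iff.1 ht <;>
      exact ⟨_, .pre _ _⟩
  · refine RSleq.mk' ?_ ?_
    · intro γ t ht
      rw [step_plus_iff] at ht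
      rcases ht with ht | ht <;> rw [step_pre_iff] at ht <;>
        obtain ⟨rfl, rfl⟩ := ht
      · exact ⟨_, .pre _ _, RSleq.refl _⟩
      · exact ⟨_, .pre _ _, hYX⟩
    · rintro γ ⟨t, ht⟩
      obtain ⟨rfl, rfl⟩ := step_pre_iff.1 ht
      exact ⟨_, .plusL (.pre _ _)⟩

/-! ### Soundness of RSP1 -/

lemma step_split {μ : Act A} {a b u : Tm A} {γ : Act A} {t : Tm A} :
    Step (Tm.plus (.plus (.pre μ a) (.pre μ b)) u) γ t ↔
      Step (Tm.plus (.pre μ a) u) γ t ∨ Step (Tm.plus (.pre μ b) u) γ t := by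
  simp only [step_plus_iff, step_pre_iff]
  tauto

lemma RSleq_half {μ : Act A} {a b u : Tm A} :
    RSleq (Tm.plus (.pre μ a) u) (.plus (.plus (.pre μ a) (.pre μ b)) u) := by
  refine RSleq.of_subset ?_ ?_
  · intro γ t h
    exact step_split.2 (Or.inl h)
  · rintro γ ⟨t, ht⟩
    rcases step_split.1 ht with ht | ht
    · exact ⟨t, ht⟩
    · rcases step_plus_iff.1 ht with ht | ht
      · obtain ⟨rfl, rfl⟩ := step_pre_iff.1 ht
        exact ⟨_, .plusL (.pre _ _)⟩
      · exact ⟨t, .plusR ht⟩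

lemma RSleq_halfR {μ : Act A} {a b u : Tm A} :
    RSleq (Tm.plus (.pre μ b) u) (.plus (.plus (.pre μ a) (.pre μ b)) u) := by
  refine RSleq.of_subset ?_ ?_
  · intro γ t h
    exact step_split.2 (Or.inr h)
  · rintro γ ⟨t, ht⟩
    rcases step_split.1 ht with ht | ht
    · simp only [canStep, step_plus_iff, step_pre_iff] at ht ⊢
      rcases ht with ⟨rfl, rfl⟩ | ht
      · exact ⟨b, Or.inl ⟨rfl, rfl⟩⟩
      · exact ⟨t, Or.inr ht⟩
    · exact ⟨t, ht⟩

lemma RSEq_RSP1 (μ ν : Act A) (a b u c d v : Tm A) :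
    RSEq (.par (.plus (.plus (.pre μ a) (.pre μ b)) u)
               (.plus (.plus (.pre ν c) (.pre ν d)) v))
      (.plus (.plus (.plus
        (.par (.plus (.pre μ a) u) (.plus (.plus (.pre ν c) (.pre ν d)) v))
        (.par (.plus (.pre μ b) u) (.plus (.plus (.pre ν c) (.pre ν d)) v)))
        (.par (.plus (.plus (.pre μ a) (.pre μ b)) u) (.plus (.pre ν c) v)))
        (.par (.plus (.plus (.pre μ a) (.pre μ b)) u) (.plus (.pre ν d) v))) := by
  have hfwd : ∀ γ t, Step (Tm.par (.plus (.plus (.pre μ a) (.pre μ b)) u)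
      (.plus (.plus (.pre ν c) (.pre ν d)) v)) γ t →
      Step (Tm.plus (.plus (.plus
        (.par (.plus (.pre μ a) u) (.plus (.plus (.pre ν c) (.pre ν d)) v))
        (.par (.plus (.pre μ b) u) (.plus (.plus (.pre ν c) (.pre ν d)) v)))
        (.par (.plus (.plus (.pre μ a) (.pre μ b)) u) (.plus (.pre ν c) v)))
        (.par (.plus (.plus (.pre μ a) (.pre μ b)) u) (.plus (.pre ν d) v))) γ t := by
    intro γ t h
    rw [step_par_iff] at h
    rcases h with ⟨l', hl, rfl⟩ | ⟨m', hm, rfl⟩ | ⟨rfl, α, l', m', hα, hl, hm, rfl⟩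
    · rcases step_split.1 hl with hl | hl
      · exact .plusL (.plusL (.plusL (.parL hl)))
      · exact .plusL (.plusL (.plusR (.parL hl)))
    · rcases step_split.1 hm with hm | hm
      · exact .plusL (.plusR (.parR hm))
      · exact .plusR (.parR hm)
    · rcases step_split.1 hl with hl | hl
      · exact .plusL (.plusL (.plusL (.comm hα hl hm)))
      · exact .plusL (.plusL (.plusR (.comm hα hl hm)))
  constructor
  · refine RSleq.of_subset hfwd ?_
    rintro γ ⟨t, ht⟩
    rw [step_plus_iff, step_plus_iff, step_plus_iff] at ht
    rcases ht with ((ht | ht) | ht) | ht <;> rw [step_par_iff] at ht <;>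
      rcases ht with ⟨l', hl, rfl⟩ | ⟨m', hm, rfl⟩ | ⟨rfl, α, l', m', hα, hl, hm, rfl⟩
    · exact ⟨_, .parL (step_split.2 (Or.inl hl))⟩
    · exact ⟨_, .parR hm⟩
    · exact ⟨_, .comm hα (step_split.2 (Or.inl hl)) hm⟩
    · exact ⟨_, .parL (step_split.2 (Or.inr hl))⟩
    · exact ⟨_, .parR hm⟩
    · exact ⟨_, .comm hα (step_split.2 (Or.inr hl)) hm⟩
    · exact ⟨_, .parL hl⟩
    · exact ⟨_, .parR (step_split.2 (Or.inl hm))⟩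
    · exact ⟨_, .comm hα hl (step_split.2 (Or.inl hm))⟩
    · exact ⟨_, .parL hl⟩
    · exact ⟨_, .parR (step_split.2 (Or.inr hm))⟩
    · exact ⟨_, .comm hα hl (step_split.2 (Or.inr hm))⟩
  · refine RSleq.mk' ?_ ?_
    · intro γ t ht
      rw [step_plus_iff, step_plus_iff, step_plus_iff] at ht
      rcases ht with ((ht | ht) | ht) | ht
      · exact (RSleq.par_cong RSleq_half (RSleq.refl _)).step ht
      · exact (RSleq.par_cong RSleq_halfR (RSleq.refl _)).step ht
      · exact (RSleq.par_cong (RSleq.refl _) RSleq_half).step ht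
      · exact (RSleq.par_cong (RSleq.refl _) RSleq_halfR).step ht
    · rintro γ ⟨t, ht⟩
      exact ⟨t, hfwd γ t ht⟩

/-! ### Soundness of RSP2 -/

lemma RSEq_RSP2 (K : List (Act A × Tm A)) (ν : Act A) (y z w : Tm A) :
    RSEq (.par (sumP K) (.plus (.plus (.pre ν y) (.pre ν z)) w))
      (.plus (.plus
        (.par (sumP K) (.plus (.pre ν y) w))
        (.par (sumP K) (.plus (.pre ν z) w)))
        (sumP (K.map fun k =>
          (k.1, Tm.par k.2 (.plus (.plus (.pre ν y) (.pre ν z)) w))))) := by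
  have hfwd : ∀ γ t, Step (Tm.par (sumP K) (.plus (.plus (.pre ν y) (.pre ν z)) w)) γ t →
      Step (Tm.plus (.plus
        (.par (sumP K) (.plus (.pre ν y) w))
        (.par (sumP K) (.plus (.pre ν z) w)))
        (sumP (K.map fun k =>
          (k.1, Tm.par k.2 (.plus (.plus (.pre ν y) (.pre ν z)) w))))) γ t := by
    intro γ t h
    rw [step_par_iff] at h
    rcases h with ⟨l', hl, rfl⟩ | ⟨m', hm, rfl⟩ | ⟨rfl, α, l', m', hα, hl, hm, rfl⟩
    · refine .plusR (step_sumP.2 ?_)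
      rw [step_sumP] at hl
      exact List.mem_map.2 ⟨(γ, l'), hl, rfl⟩
    · rcases step_split.1 hm with hm | hm
      · exact .plusL (.plusL (.parR hm))
      · exact .plusL (.plusR (.parR hm))
    · rcases step_split.1 hm with hm | hm
      · exact .plusL (.plusL (.comm hα hl hm))
      · exact .plusL (.plusR (.comm hα hl hm))
  constructor
  · refine RSleq.of_subset hfwd ?_
    rintro γ ⟨t, ht⟩
    rw [step_plus_iff, step_plus_iff] at ht
    rcases ht with (ht | ht) | ht
    · rw [step_par_iff] at ht
      rcases ht with ⟨l', hl, rfl⟩ | ⟨m', hm, rfl⟩ | ⟨rfl, α, l', m', hα, hl, hm, rfl⟩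
      · exact ⟨_, .parL hl⟩
      · exact ⟨_, .parR (step_split.2 (Or.inl hm))⟩
      · exact ⟨_, .comm hα hl (step_split.2 (Or.inl hm))⟩
    · rw [step_par_iff] at ht
      rcases ht with ⟨l', hl, rfl⟩ | ⟨m', hm, rfl⟩ | ⟨rfl, α, l', m', hα, hl, hm, rfl⟩
      · exact ⟨_, .parL hl⟩
      · exact ⟨_, .parR (step_split.2 (Or.inr hm))⟩
      · exact ⟨_, .comm hα hl (step_split.2 (Or.inr hm))⟩
    · rw [step_sumP] at ht
      obtain ⟨k, hk, hk'⟩ := List.mem_map.1 ht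
      have h1 : k.1 = γ := congrArg Prod.fst hk'
      have hmem : (γ, k.2) ∈ K := by rw [← h1]; simpa using hk
      exact ⟨_, .parL (step_sumP.2 hmem)⟩
  · refine RSleq.mk' ?_ ?_
    · intro γ t ht
      rw [step_plus_iff, step_plus_iff] at ht
      rcases ht with (ht | ht) | ht
      · refine (RSleq.par_cong (RSleq.refl _) ?_).step ht
        exact RSleq_half
      · refine (RSleq.par_cong (RSleq.refl _) ?_).step ht
        exact RSleq_halfR
      · rw [step_sumP] at ht
        obtain ⟨k, hk, hk'⟩ := List.mem_map.1 ht
        have h1 : k.1 = γ := congrArg Prod.fst hk'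
        have h2 : Tm.par k.2 (.plus (.plus (.pre ν y) (.pre ν z)) w) = t :=
          congrArg Prod.snd hk'
        subst h2
        have hmem : (γ, k.2) ∈ K := by rw [← h1]; simpa using hk
        exact ⟨_, .parL (step_sumP.2 hmem), RSleq.refl _⟩
    · rintro γ ⟨t, ht⟩
      exact ⟨t, hfwd γ t ht⟩

end RSproof

namespace RSproof
open Tm Act

variable {A : Type} [DecidableEq A]

/-! ### Soundness of EL2 -/

lemma RSEq_EL2 (K N : List (Act A × Tm A)) :
    RSEq (.par (sumP K) (sumP N))
      (listSum ((K.map fun k => Tm.pre k.1 (.par k.2 (sumP N))) ++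
                (N.map fun q => Tm.pre q.1 (.par (sumP K) q.2)) ++
                (K.flatMap fun k =>
                  (N.filter fun q => decide (k.1 ≠ Act.tau ∧ k.1 = q.1.co)).map
                    fun q => Tm.pre .tau (.par k.2 q.2)))) := by
  refine RSEq.of_steps_eq fun γ t => ?_
  rw [step_par_iff, step_listSum]
  constructor
  · rintro (⟨a', ha, rfl⟩ | ⟨b', hb, rfl⟩ | ⟨rfl, α, a', b', hα, ha, hb, rfl⟩)
    · rw [step_sumP] at ha
      refine ⟨.pre γ (.par a' (sumP N)), ?_, .pre _ _⟩
      refine List.mem_append.2 (Or.inl (List.mem_append.2 (Or.inl ?_)))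
      exact List.mem_map.2 ⟨(γ, a'), ha, rfl⟩
    · rw [step_sumP] at hb
      refine ⟨.pre γ (.par (sumP K) b'), ?_, .pre _ _⟩
      refine List.mem_append.2 (Or.inl (List.mem_append.2 (Or.inr ?_)))
      exact List.mem_map.2 ⟨(γ, b'), hb, rfl⟩
    · rw [step_sumP] at ha hb
      refine ⟨.pre .tau (.par a' b'), ?_, .pre _ _⟩
      refine List.mem_append.2 (Or.inr ?_)
      refine List.mem_flatMap.2 ⟨(α, a'), ha, ?_⟩
      refine List.mem_map.2 ⟨(α.co, b'), ?_, rfl⟩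
      refine List.mem_filter.2 ⟨hb, ?_⟩
      simp [hα, co_co]
  · rintro ⟨s, hs, hstep⟩
    rcases List.mem_append.1 hs with hs | hs
    · rcases List.mem_append.1 hs with hs | hs
      · obtain ⟨k, hk, rfl⟩ := List.mem_map.1 hs
        obtain ⟨rfl, rfl⟩ := step_pre_iff.1 hstep
        exact Or.inl ⟨k.2, step_sumP.2 (by simpa using hk), rfl⟩
      · obtain ⟨q, hq, rfl⟩ := List.mem_map.1 hs
        obtain ⟨rfl, rfl⟩ := step_pre_iff.1 hstep
        exact Or.inr (Or.inl ⟨q.2, step_sumP.2 (by simpa using hq), rfl⟩)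
    · obtain ⟨k, hk, hmem⟩ := List.mem_flatMap.1 hs
      obtain ⟨q, hq, rfl⟩ := List.mem_map.1 hmem
      obtain ⟨hqN, hcond⟩ := List.mem_filter.1 hq
      rw [decide_eq_true_eq] at hcond
      obtain ⟨hne, heq⟩ := hcond
      obtain ⟨rfl, rfl⟩ := step_pre_iff.1 hstep
      refine Or.inr (Or.inr ⟨rfl, k.1, k.2, q.2, hne,
        step_sumP.2 (by simpa using hk), step_sumP.2 ?_, rfl⟩)
      have : k.1.co = q.1 := by rw [heq, co_co]
      rw [this]
      simpa using hqN

/-! ### Soundness of all axiom instances -/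

lemma sound_ax {t u : Tm A} (h : (t, u) ∈ ERS A) (σ : ℕ → Tm A) :
    RSEq (subst σ t) (subst σ u) := by
  rcases h with (((h | h) | h) | h) | h
  · -- E1
    simp only [E1, E0, Set.mem_union, Set.mem_insert_iff, Set.mem_singleton_iff] at h
    rcases h with (h | h | h | h) | (h | h) <;>
      obtain ⟨rfl, rfl⟩ := Prod.ext_iff.1 h
    · exact RSEq_plus_nil _
    · exact RSEq_plus_comm _ _
    · exact RSEq_plus_assoc _ _ _
    · exact RSEq_plus_idem _
    · exact RSEq_par_nil _
    · exact RSEq_par_comm _ _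
  · -- RS
    obtain ⟨μ, ν, he⟩ := h
    obtain ⟨rfl, rfl⟩ := Prod.ext_iff.1 he
    exact RSEq_RS μ ν (σ 0) (σ 1) (σ 2)
  · -- RSP1
    obtain ⟨μ, ν, he⟩ := h
    obtain ⟨rfl, rfl⟩ := Prod.ext_iff.1 he
    exact RSEq_RSP1 μ ν (σ 0) (σ 1) (σ 2) (σ 3) (σ 4) (σ 5)
  · -- RSP2
    obtain ⟨L, ν, iy, iz, iw, h1, h2, he⟩ := h
    obtain ⟨rfl, rfl⟩ := Prod.ext_iff.1 he
    have key := RSEq_RSP2 (L.map fun p => (p.1, σ p.2)) ν (σ iy) (σ iz) (σ iw)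
    simp only [subst, subst_prefixed, subst_listSum, sumP, List.map_map,
      Function.comp_def] at key ⊢
    exact key
  · -- EL2
    obtain ⟨I, J, h1, h2, h3, he⟩ := h
    obtain ⟨rfl, rfl⟩ := Prod.ext_iff.1 he
    have key := RSEq_EL2 (I.map fun p => (p.1, σ p.2)) (J.map fun p => (p.1, σ p.2))
    simp only [subst, subst_prefixed, subst_listSum, sumP, List.map_map,
      List.map_append, List.map_flatMap, List.flatMap_map, List.filter_map,
      Function.comp_def] at key ⊢
    exact key

lemma soundDeriv {t u : Tm A} (h : Deriv (ERS A) t u) : RSEq t u := by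
  induction h with
  | ax σ hmem => exact sound_ax hmem σ
  | refl t => exact RSEq.rfl t
  | symm h ih => exact RSEq.symm' ih
  | trans h₁ h₂ ih₁ ih₂ => exact RSEq.trans' ih₁ ih₂
  | pre μ h ih => exact RSEq.pre_cong μ ih
  | plus h₁ h₂ ih₁ ih₂ => exact RSEq.plus_cong ih₁ ih₂
  | par h₁ h₂ ih₁ ih₂ => exact RSEq.par_cong ih₁ ih₂

end RSproof

namespace RSproof
open Tm Act

variable {A : Type} [DecidableEq A]

/-! ### Tagging lists with fresh variables -/

def tag (k : ℕ) : List (Act A × Tm A) → List (Act A × ℕ)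
  | [] => []
  | x :: xs => (x.1, k) :: tag (k + 1) xs

lemma tag_fst (k : ℕ) (L : List (Act A × Tm A)) :
    (tag k L).map Prod.fst = L.map Prod.fst := by
  induction L generalizing k with
  | nil => rfl
  | cons x xs ih => simp [tag, ih]

lemma tag_snd_mem {k n : ℕ} {L : List (Act A × Tm A)}
    (h : n ∈ (tag k L).map Prod.snd) : k ≤ n ∧ n < k + L.length := by
  induction L generalizing k with
  | nil => simp [tag] at h
  | cons x xs ih =>
    simp only [tag, List.map_cons, List.mem_cons] at h
    rcases h with rfl | h
    · simp only [List.length_cons]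
      omega
    · obtain ⟨h1, h2⟩ := ih h
      simp only [List.length_cons]
      omega

lemma tag_snd_nodup (k : ℕ) (L : List (Act A × Tm A)) :
    ((tag k L).map Prod.snd).Nodup := by
  induction L generalizing k with
  | nil => simp [tag]
  | cons x xs ih =>
    simp only [tag, List.map_cons, List.nodup_cons]
    refine ⟨fun h => ?_, ih (k + 1)⟩
    have := tag_snd_mem h
    omega

lemma tag_map_g {β : Type} (G : Act A → Tm A → β) :
    ∀ (L : List (Act A × Tm A)) (k : ℕ) (σ : ℕ → Tm A),
    (∀ i (hi : i < L.length), σ (k + i) = (L[i]'hi).2) →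
    (tag k L).map (fun p => G p.1 (σ p.2)) = L.map (fun x => G x.1 x.2) := by
  intro L
  induction L with
  | nil => intro k σ h; rfl
  | cons x xs ih =>
    intro k σ h
    simp only [tag, List.map_cons]
    congr 1
    · have h0 := h 0 (by simp)
      simp only [Nat.add_zero, List.getElem_cons_zero] at h0
      rw [h0]
    · refine ih (k + 1) σ fun i hi => ?_
      have := h (i + 1) (by simp only [List.length_cons]; omega)
      simp only [List.getElem_cons_succ] at this
      rw [← this]
      congr 1
      omega

lemma tag_map (L : List (Act A × Tm A)) (k : ℕ) (σ : ℕ → Tm A)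
    (h : ∀ i (hi : i < L.length), σ (k + i) = (L[i]'hi).2) :
    (tag k L).map (fun p => (p.1, σ p.2)) = L := by
  rw [tag_map_g (fun a t => (a, t)) L k σ h]
  exact (List.map_congr_left fun a _ => rfl).trans (List.map_id L)

lemma tag_filter_map_g {β : Type} (G : Act A → Tm A → β) (d : Act A → Bool) :
    ∀ (L : List (Act A × Tm A)) (k : ℕ) (σ : ℕ → Tm A),
    (∀ i (hi : i < L.length), σ (k + i) = (L[i]'hi).2) →
    ((tag k L).filter (fun p => d p.1)).map (fun p => G p.1 (σ p.2)) =
      (L.filter (fun x => d x.1)).map (fun x => G x.1 x.2) := by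
  intro L
  induction L with
  | nil => intro k σ h; rfl
  | cons x xs ih =>
    intro k σ h
    have h0 := h 0 (by simp)
    simp only [Nat.add_zero, List.getElem_cons_zero] at h0
    have htail : ∀ i (hi : i < xs.length), σ (k + 1 + i) = (xs[i]'hi).2 := by
      intro i hi
      have := h (i + 1) (by simp only [List.length_cons]; omega)
      simp only [List.getElem_cons_succ] at this
      rw [← this]
      congr 1
      omega
    by_cases hd : d x.1 = true
    · simp [tag, List.filter_cons, hd, h0, ih (k + 1) σ htail]
    · simp [tag, List.filter_cons, hd, ih (k + 1) σ htail]

lemma tag_length (k : ℕ) (L : List (Act A × Tm A)) : (tag k L).length = L.length := by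
  induction L generalizing k with
  | nil => rfl
  | cons x xs ih => simp [tag, ih]

/-! ### Extracting duplicated actions -/

lemma dup_split {L : List (Act A × Tm A)} (h : ¬ (L.map Prod.fst).Nodup) :
    ∃ (μ : Act A) (a b : Tm A) (R : List (Act A × Tm A)),
      L.Perm ((μ, a) :: (μ, b) :: R) := by
  induction L with
  | nil => simp at h
  | cons x xs ih =>
    by_cases hx : x.1 ∈ xs.map Prod.fst
    · obtain ⟨y, hy, hyx⟩ := List.mem_map.1 hx
      obtain ⟨R, hperm, -, -⟩ := perm_of_mem hy
      refine ⟨x.1, x.2, y.2, R, ?_⟩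
      have h1 : (x :: xs).Perm (x :: y :: R) := List.Perm.cons x hperm
      have hxx : (x.1, x.2) = x := Prod.mk.eta
      have hyy : (x.1, y.2) = y := by rw [← hyx]
      rw [hxx, hyy]
      exact h1
    · have h' : ¬ (xs.map Prod.fst).Nodup := by
        simp only [List.map_cons, List.nodup_cons] at h
        tauto
      obtain ⟨μ, a, b, R, hperm⟩ := ih h'
      refine ⟨μ, a, b, x :: R, ?_⟩
      have s1 : (x :: xs).Perm (x :: (μ, a) :: (μ, b) :: R) := List.Perm.cons x hperm
      have s2 : (x :: (μ, a) :: (μ, b) :: R).Perm ((μ, a) :: x :: (μ, b) :: R) :=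
        List.Perm.swap _ _ _
      have s3 : ((μ, a) :: x :: (μ, b) :: R).Perm ((μ, a) :: (μ, b) :: x :: R) :=
        List.Perm.cons _ (List.Perm.swap _ _ _)
      exact (s1.trans s2).trans s3

/-! ### Eliminating sums pointwise -/

lemma listSum_elim {l : List (Tm A)}
    (h : ∀ x ∈ l, ∃ y, SOP y ∧ Deriv (ERS A) x y) :
    ∃ r, SOP r ∧ Deriv (ERS A) (listSum l) r := by
  induction l with
  | nil => exact ⟨.nil, trivial, Deriv.refl _⟩
  | cons x xs ih =>
    cases xs with
    | nil => exact h x (by simp)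
    | cons y ys =>
      obtain ⟨r₁, hr₁, hd₁⟩ := h x (by simp)
      obtain ⟨r₂, hr₂, hd₂⟩ := ih fun z hz => h z (List.mem_cons_of_mem _ hz)
      exact ⟨.plus r₁ r₂, ⟨hr₁, hr₂⟩, Deriv.plus hd₁ hd₂⟩

end RSproof

namespace RSproof
open Tm Act

variable {A : Type} [DecidableEq A]

/-- Substitution for the RSP2 instances. -/
def sigB (L : List (Act A × Tm A)) (c d w : Tm A) : ℕ → Tm A := fun n =>
  if h : n < L.length then (L[n]'h).2
  else if n = L.length then c else if n = L.length + 1 then d else w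

lemma sigB_lt {L : List (Act A × Tm A)} {c d w : Tm A} {i : ℕ} (hi : i < L.length) :
    sigB L c d w i = (L[i]'hi).2 := by simp [sigB, hi]

lemma sigB_y (L : List (Act A × Tm A)) (c d w : Tm A) : sigB L c d w L.length = c := by
  simp [sigB]

lemma sigB_z (L : List (Act A × Tm A)) (c d w : Tm A) :
    sigB L c d w (L.length + 1) = d := by
  have h1 : ¬ (L.length + 1 < L.length) := by omega
  have h2 : ¬ (L.length + 1 = L.length) := by omega
  simp [sigB, h1, h2]

lemma sigB_w (L : List (Act A × Tm A)) (c d w : Tm A) :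
    sigB L c d w (L.length + 2) = w := by
  have h1 : ¬ (L.length + 2 < L.length) := by omega
  have h2 : ¬ (L.length + 2 = L.length) := by omega
  have h3 : ¬ (L.length + 2 = L.length + 1) := by omega
  simp [sigB, h1, h2, h3]

/-- Substitution for the EL2 instances. -/
def sigC (K N : List (Act A × Tm A)) : ℕ → Tm A := fun n =>
  if h : n < K.length then (K[n]'h).2
  else if h : n - K.length < N.length then (N[n - K.length]'h).2 else .nil

lemma sigC_lt {K N : List (Act A × Tm A)} {i : ℕ} (hi : i < K.length) :
    sigC K N i = (K[i]'hi).2 := by simp [sigC, hi]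

lemma sigC_ge {K N : List (Act A × Tm A)} {i : ℕ} (hi : i < N.length) :
    sigC K N (K.length + i) = (N[i]'hi).2 := by
  have h1 : ¬ (K.length + i < K.length) := by omega
  have h2 : K.length + i - K.length = i := by omega
  simp [sigC, h1, h2, hi]

def sub6 (x0 x1 x2 x3 x4 x5 : Tm A) : ℕ → Tm A := fun n =>
  if n = 0 then x0 else if n = 1 then x1 else if n = 2 then x2
  else if n = 3 then x3 else if n = 4 then x4 else x5

lemma flatMap_congr_mem {α β : Type} {l : List α} {f g : α → List β}
    (h : ∀ x ∈ l, f x = g x) : l.flatMap f = l.flatMap g := by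
  induction l with
  | nil => rfl
  | cons x xs ih =>
    simp only [List.flatMap_cons, h x (by simp),
      ih fun z hz => h z (List.mem_cons_of_mem _ hz)]

lemma tag_flatMap_g {β : Type} (G : Act A → Tm A → List β) :
    ∀ (L : List (Act A × Tm A)) (k : ℕ) (σ : ℕ → Tm A),
    (∀ i (hi : i < L.length), σ (k + i) = (L[i]'hi).2) →
    (tag k L).flatMap (fun p => G p.1 (σ p.2)) = L.flatMap (fun x => G x.1 x.2) := by
  intro L
  induction L with
  | nil => intro k σ h; rfl
  | cons x xs ih =>
    intro k σ h
    have h0 := h 0 (by simp)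
    simp only [Nat.add_zero, List.getElem_cons_zero] at h0
    have htail : ∀ i (hi : i < xs.length), σ (k + 1 + i) = (xs[i]'hi).2 := by
      intro i hi
      have := h (i + 1) (by simp only [List.length_cons]; omega)
      simp only [List.getElem_cons_succ] at this
      rw [← this]
      congr 1
      omega
    simp only [tag, List.flatMap_cons, h0, ih (k + 1) σ htail]

/-- Bounding the depth of rearranged right-hand sides. -/
lemma depth_plus3 {ν : Act A} {c d : Tm A} {V : List (Act A × Tm A)} {s' : Tm A}
    (hmc : (ν, c) ∈ summ s') (hmd : (ν, d) ∈ summ s')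
    (hmV : ∀ x ∈ V, x ∈ summ s') :
    depth (Tm.plus (.plus (.pre ν c) (.pre ν d)) (sumP V)) ≤ depth s' := by
  have h1 : depth c + 1 ≤ depth s' := depth_summand hmc
  have h2 : depth d + 1 ≤ depth s' := depth_summand hmd
  have h3 : depth (sumP V) ≤ depth s' :=
    depth_sumP fun x hx => depth_summand (hmV x hx)
  simp only [depth]
  omega

end RSproof

namespace RSproof
open Tm Act

variable {A : Type} [DecidableEq A]

lemma elim_branchB (n m : ℕ)
    (ihn : ∀ k, k < n → ∀ s s' : Tm A, SOP s → SOP s' → depth s + depth s' ≤ k →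
      ∃ r, SOP r ∧ Deriv (ERS A) (.par s s') r)
    (ihm : ∀ k, k < m → ∀ s s' : Tm A, SOP s → SOP s' →
      depth s + depth s' ≤ n → (summ s).length + (summ s').length ≤ k →
      ∃ r, SOP r ∧ Deriv (ERS A) (.par s s') r)
    (s s' : Tm A) (hs : SOP s) (hs' : SOP s')
    (hd : depth s + depth s' ≤ n) (hc : (summ s).length + (summ s').length ≤ m)
    (hnd : ((summ s).map Prod.fst).Nodup)
    (hdup : ¬ ((summ s').map Prod.fst).Nodup) :
    ∃ r, SOP r ∧ Deriv (ERS A) (.par s s') r := by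
  classical
  obtain ⟨ν, c, d, V, hperm⟩ := dup_split hdup
  have hmc : (ν, c) ∈ summ s' := hperm.symm.subset (by simp)
  have hmd : (ν, d) ∈ summ s' := hperm.symm.subset (by simp)
  have hmV : ∀ x ∈ V, x ∈ summ s' := fun x hx => hperm.symm.subset (by simp [hx])
  have hsc : SOP c := hs'.summ_mem hmc
  have hsd : SOP d := hs'.summ_mem hmd
  have hsV : ∀ x ∈ V, SOP x.2 := fun x hx => hs'.summ_mem (hmV x hx)
  have hsL : ∀ x ∈ summ s, SOP x.2 := fun x hx => hs.summ_mem hx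
  set L := summ s with hLdef
  set M : Tm A := .plus (.plus (.pre ν c) (.pre ν d)) (sumP V) with hM
  have hsM : SOP M := ⟨⟨hsc, hsd⟩, SOP_sumP hsV⟩
  have hdM : depth M ≤ depth s' := depth_plus3 hmc hmd hmV
  have hds' : Deriv (ERS A) s' M := by
    refine drearrange_perm hs' hsM ?_
    simpa [hM, summ, summ_sumP] using hperm
  have hlen : (summ s').length = V.length + 2 := by
    rw [hperm.length_eq]; simp
  have hm2 : L.length + V.length + 2 ≤ m := by
    rw [hlen] at hc; omega
  -- the axiom instance
  set σ : ℕ → Tm A := sigB L c d (sumP V) with hσ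
  have hag : ∀ i (hi : i < L.length), σ (0 + i) = (L[i]'hi).2 := by
    intro i hi
    rw [Nat.zero_add, hσ, sigB_lt hi]
  have hvars : ((tag 0 L).map Prod.snd ++ [L.length, L.length + 1, L.length + 2]).Nodup := by
    refine List.Nodup.append (tag_snd_nodup 0 L) (by simp) ?_
    intro a ha hb
    have h1 := tag_snd_mem ha
    simp only [List.mem_cons, List.not_mem_nil, or_false] at hb
    rcases hb with rfl | rfl | rfl <;> omega
  have hax := Deriv.ax (E := ERS A) σ
    (memRSP2 ⟨tag 0 L, ν, L.length, L.length + 1, L.length + 2,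
      by rw [tag_fst]; exact hnd, hvars, rfl⟩)
  simp only [subst, subst_prefixed, subst_listSum, List.map_map,
    Function.comp_def] at hax
  have e1 : σ L.length = c := by rw [hσ]; exact sigB_y L c d (sumP V)
  have e2 : σ (L.length + 1) = d := by rw [hσ]; exact sigB_z L c d (sumP V)
  have e3 : σ (L.length + 2) = sumP V := by rw [hσ]; exact sigB_w L c d (sumP V)
  rw [e1, e2, e3, tag_map L 0 σ hag] at hax
  have h3 := tag_map_g (fun a t => Tm.pre a
    (Tm.par t (Tm.plus (.plus (.pre ν c) (.pre ν d)) (sumP V)))) L 0 σ hag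
  rw [h3] at hax
  -- hax : Deriv (par (sumP L) M) (plus (plus Q1 Q2) Q3)
  -- eliminate the components
  have hdL : depth (sumP L) ≤ depth s := depth_sumP fun x hx => depth_summand hx
  have hQ1 : ∃ r, SOP r ∧
      Deriv (ERS A) (.par (sumP L) (.plus (.pre ν c) (sumP V))) r := by
    refine ihm (m - 1) (by omega) _ _ (SOP_sumP hsL) ⟨hsc, SOP_sumP hsV⟩ ?_ ?_
    · have : depth (Tm.plus (.pre ν c) (sumP V)) ≤ depth s' := by
        have h1 : depth c + 1 ≤ depth s' := depth_summand hmc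
        have h3 : depth (sumP V) ≤ depth s' :=
          depth_sumP fun x hx => depth_summand (hmV x hx)
        simp only [depth]; omega
      omega
    · simp only [summ_sumP, summ, List.length_append, List.length_cons,
        List.length_map, List.length_singleton, List.length_nil]
      omega
  have hQ2 : ∃ r, SOP r ∧
      Deriv (ERS A) (.par (sumP L) (.plus (.pre ν d) (sumP V))) r := by
    refine ihm (m - 1) (by omega) _ _ (SOP_sumP hsL) ⟨hsd, SOP_sumP hsV⟩ ?_ ?_
    · have : depth (Tm.plus (.pre ν d) (sumP V)) ≤ depth s' := by
        have h1 : depth d + 1 ≤ depth s' := depth_summand hmd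
        have h3 : depth (sumP V) ≤ depth s' :=
          depth_sumP fun x hx => depth_summand (hmV x hx)
        simp only [depth]; omega
      omega
    · simp only [summ_sumP, summ, List.length_append, List.length_cons,
        List.length_map, List.length_singleton, List.length_nil]
      omega
  have hQ3 : ∃ r, SOP r ∧
      Deriv (ERS A) (listSum (L.map fun x => Tm.pre x.1 (.par x.2 M))) r := by
    refine listSum_elim ?_
    intro x hx
    rw [List.mem_map] at hx
    obtain ⟨p, hp, rfl⟩ := hx
    have hdp : depth p.2 + 1 ≤ depth s := depth_summand hp
    obtain ⟨r', hr', hd'⟩ := ihn (depth p.2 + depth M) (by omega) p.2 M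
      (hs.summ_mem hp) hsM le_rfl
    exact ⟨.pre p.1 r', hr', Deriv.pre _ hd'⟩
  obtain ⟨r₁, hr₁, hd₁⟩ := hQ1
  obtain ⟨r₂, hr₂, hd₂⟩ := hQ2
  obtain ⟨r₃, hr₃, hd₃⟩ := hQ3
  refine ⟨.plus (.plus r₁ r₂) r₃, ⟨⟨hr₁, hr₂⟩, hr₃⟩, ?_⟩
  have hstart : Deriv (ERS A) (Tm.par s s') (.par (sumP L) M) :=
    Deriv.par (dsumP s hs) hds'
  exact Deriv.trans hstart (Deriv.trans hax
    (Deriv.plus (Deriv.plus hd₁ hd₂) hd₃))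

end RSproof

namespace RSproof
open Tm Act

variable {A : Type} [DecidableEq A]

lemma elim_par : ∀ n : ℕ, ∀ m : ℕ, ∀ s s' : Tm A, SOP s → SOP s' →
    depth s + depth s' ≤ n → (summ s).length + (summ s').length ≤ m →
    ∃ r, SOP r ∧ Deriv (ERS A) (.par s s') r := by
  intro n
  induction n using Nat.strong_induction_on with
  | _ n ihn =>
  intro m
  induction m using Nat.strong_induction_on with
  | _ m ihm =>
  intro s s' hs hs' hd hc
  have ihn' : ∀ k, k < n → ∀ s s' : Tm A, SOP s → SOP s' → depth s + depth s' ≤ k →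
      ∃ r, SOP r ∧ Deriv (ERS A) (.par s s') r := fun k hk s s' h1 h2 h3 =>
    ihn k hk ((summ s).length + (summ s').length) s s' h1 h2 h3 le_rfl
  have ihm' : ∀ k, k < m → ∀ s s' : Tm A, SOP s → SOP s' →
      depth s + depth s' ≤ n → (summ s).length + (summ s').length ≤ k →
      ∃ r, SOP r ∧ Deriv (ERS A) (.par s s') r := fun k hk => ihm k hk
  by_cases h1 : ((summ s).map Prod.fst).Nodup
  · by_cases h2 : ((summ s').map Prod.fst).Nodup
    · -- EL2 case
      set K := summ s with hK
      set N := summ s' with hN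
      set σ : ℕ → Tm A := sigC K N with hσ
      have hagK : ∀ i (hi : i < K.length), σ (0 + i) = (K[i]'hi).2 := by
        intro i hi; rw [Nat.zero_add, hσ, sigC_lt hi]
      have hagN : ∀ i (hi : i < N.length), σ (K.length + i) = (N[i]'hi).2 := by
        intro i hi; rw [hσ, sigC_ge hi]
      have hvars : ((tag 0 K).map Prod.snd ++ (tag K.length N).map Prod.snd).Nodup := by
        refine List.Nodup.append (tag_snd_nodup 0 K) (tag_snd_nodup K.length N) ?_
        intro x hx hx'
        have ha := tag_snd_mem hx
        have hb := tag_snd_mem hx'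
        omega
      have hax := Deriv.ax (E := ERS A) σ
        (memEL2 ⟨tag 0 K, tag K.length N,
          by rw [tag_fst]; exact h1, by rw [tag_fst]; exact h2, hvars, rfl⟩)
      simp only [subst, subst_prefixed, subst_listSum, List.map_append,
        List.map_map, List.map_flatMap, Function.comp_def] at hax
      rw [tag_map K 0 σ hagK, tag_map N K.length σ hagN] at hax
      have hg1 := tag_map_g (fun a t => Tm.pre a (Tm.par t (sumP N))) K 0 σ hagK
      have hg2 := tag_map_g (fun a t => Tm.pre a (Tm.par (sumP K) t)) N K.length σ hagN
      rw [hg1, hg2] at hax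
      have hg3a : (tag 0 K).flatMap (fun p =>
            ((tag K.length N).filter
              (fun q => decide (p.1 ≠ Act.tau ∧ p.1 = q.1.co))).map
              (fun q => Tm.pre .tau (Tm.par (σ p.2) (σ q.2)))) =
          (tag 0 K).flatMap (fun p =>
            (N.filter (fun x => decide (p.1 ≠ Act.tau ∧ p.1 = x.1.co))).map
              (fun x => Tm.pre .tau (Tm.par (σ p.2) x.2))) := by
        refine flatMap_congr_mem fun p _ => ?_
        exact tag_filter_map_g (fun _ t => Tm.pre .tau (Tm.par (σ p.2) t))
          (fun a => decide (p.1 ≠ Act.tau ∧ p.1 = a.co)) N K.length σ hagN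
      have hg3b := tag_flatMap_g (fun a t =>
        (N.filter (fun x => decide (a ≠ Act.tau ∧ a = x.1.co))).map
          (fun x => Tm.pre .tau (Tm.par t x.2))) K 0 σ hagK
      rw [hg3a, hg3b] at hax
      have hcomp : ∃ r, SOP r ∧ Deriv (ERS A)
          (listSum ((K.map fun x => Tm.pre x.1 (.par x.2 (sumP N))) ++
            (N.map fun x => Tm.pre x.1 (.par (sumP K) x.2)) ++
            (K.flatMap fun x =>
              (N.filter fun q => decide (x.1 ≠ Act.tau ∧ x.1 = q.1.co)).map
                fun q => Tm.pre .tau (.par x.2 q.2)))) r := by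
        refine listSum_elim ?_
        intro x hx
        rcases List.mem_append.1 hx with hx | hx
        · rcases List.mem_append.1 hx with hx | hx
          · obtain ⟨p, hp, rfl⟩ := List.mem_map.1 hx
            have hdp : depth p.2 + 1 ≤ depth s := depth_summand hp
            have hdN : depth (sumP N) ≤ depth s' :=
              depth_sumP fun x hx => depth_summand hx
            obtain ⟨r', hr', hdr'⟩ := ihn' (depth p.2 + depth (sumP N))
              (by omega) p.2 (sumP N) (hs.summ_mem hp)
              (SOP_sumP fun x hx => hs'.summ_mem hx) le_rfl
            exact ⟨.pre p.1 r', hr', Deriv.pre _ hdr'⟩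
          · obtain ⟨q, hq, rfl⟩ := List.mem_map.1 hx
            have hdq : depth q.2 + 1 ≤ depth s' := depth_summand hq
            have hdKd : depth (sumP K) ≤ depth s :=
              depth_sumP fun x hx => depth_summand hx
            obtain ⟨r', hr', hdr'⟩ := ihn' (depth (sumP K) + depth q.2)
              (by omega) (sumP K) q.2 (SOP_sumP fun x hx => hs.summ_mem hx)
              (hs'.summ_mem hq) le_rfl
            exact ⟨.pre q.1 r', hr', Deriv.pre _ hdr'⟩
        · obtain ⟨p, hp, hmem⟩ := List.mem_flatMap.1 hx
          obtain ⟨q, hq, rfl⟩ := List.mem_map.1 hmem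
          have hqN : q ∈ N := List.mem_of_mem_filter hq
          have hdp : depth p.2 + 1 ≤ depth s := depth_summand hp
          have hdq : depth q.2 + 1 ≤ depth s' := depth_summand hqN
          obtain ⟨r', hr', hdr'⟩ := ihn' (depth p.2 + depth q.2) (by omega)
            p.2 q.2 (hs.summ_mem hp) (hs'.summ_mem hqN) le_rfl
          exact ⟨.pre .tau r', hr', Deriv.pre _ hdr'⟩
      obtain ⟨r, hr, hdr⟩ := hcomp
      refine ⟨r, hr, ?_⟩
      exact Deriv.trans (Deriv.par (dsumP s hs) (dsumP s' hs'))
        (Deriv.trans hax hdr)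
    · -- RSP2 case (duplicate on the right)
      exact elim_branchB n m ihn' ihm' s s' hs hs' hd hc h1 h2
  · by_cases h2 : ((summ s').map Prod.fst).Nodup
    · -- RSP2 case, mirrored
      obtain ⟨r, hr, hdr⟩ := elim_branchB n m ihn' ihm' s' s hs' hs
        (by omega) (by omega) h2 h1
      exact ⟨r, hr, Deriv.trans (dparC s s') hdr⟩
    · -- RSP1 case (duplicates on both sides)
      obtain ⟨μ, a, b, U, hpermL⟩ := dup_split h1
      obtain ⟨ν, c, d, V, hpermR⟩ := dup_split h2
      have hma : (μ, a) ∈ summ s := hpermL.symm.subset (by simp)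
      have hmb : (μ, b) ∈ summ s := hpermL.symm.subset (by simp)
      have hmU : ∀ x ∈ U, x ∈ summ s := fun x hx => hpermL.symm.subset (by simp [hx])
      have hmc : (ν, c) ∈ summ s' := hpermR.symm.subset (by simp)
      have hmd : (ν, d) ∈ summ s' := hpermR.symm.subset (by simp)
      have hmV : ∀ x ∈ V, x ∈ summ s' := fun x hx => hpermR.symm.subset (by simp [hx])
      have hsa : SOP a := hs.summ_mem hma
      have hsb : SOP b := hs.summ_mem hmb
      have hsU : ∀ x ∈ U, SOP x.2 := fun x hx => hs.summ_mem (hmU x hx)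
      have hsc : SOP c := hs'.summ_mem hmc
      have hsd : SOP d := hs'.summ_mem hmd
      have hsV : ∀ x ∈ V, SOP x.2 := fun x hx => hs'.summ_mem (hmV x hx)
      have hsLs : SOP (Tm.plus (.plus (.pre μ a) (.pre μ b)) (sumP U)) :=
        ⟨⟨hsa, hsb⟩, SOP_sumP hsU⟩
      have hsMs : SOP (Tm.plus (.plus (.pre ν c) (.pre ν d)) (sumP V)) :=
        ⟨⟨hsc, hsd⟩, SOP_sumP hsV⟩
      have hdsL : Deriv (ERS A) s (.plus (.plus (.pre μ a) (.pre μ b)) (sumP U)) := by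
        refine drearrange_perm hs hsLs ?_
        simpa [summ, summ_sumP] using hpermL
      have hdsM : Deriv (ERS A) s' (.plus (.plus (.pre ν c) (.pre ν d)) (sumP V)) := by
        refine drearrange_perm hs' hsMs ?_
        simpa [summ, summ_sumP] using hpermR
      have hlenL : (summ s).length = U.length + 2 := by rw [hpermL.length_eq]; simp
      have hlenR : (summ s').length = V.length + 2 := by rw [hpermR.length_eq]; simp
      have hdLa : depth (Tm.plus (.plus (.pre μ a) (.pre μ b)) (sumP U)) ≤ depth s :=
        depth_plus3 hma hmb hmU
      have hdMa : depth (Tm.plus (.plus (.pre ν c) (.pre ν d)) (sumP V)) ≤ depth s' :=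
        depth_plus3 hmc hmd hmV
      have hax : Deriv (ERS A)
          (.par (.plus (.plus (.pre μ a) (.pre μ b)) (sumP U))
                (.plus (.plus (.pre ν c) (.pre ν d)) (sumP V)))
          (.plus (.plus (.plus
            (.par (.plus (.pre μ a) (sumP U))
                  (.plus (.plus (.pre ν c) (.pre ν d)) (sumP V)))
            (.par (.plus (.pre μ b) (sumP U))
                  (.plus (.plus (.pre ν c) (.pre ν d)) (sumP V))))
            (.par (.plus (.plus (.pre μ a) (.pre μ b)) (sumP U))
                  (.plus (.pre ν c) (sumP V))))
            (.par (.plus (.plus (.pre μ a) (.pre μ b)) (sumP U))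
                  (.plus (.pre ν d) (sumP V)))) := by
        have := Deriv.ax (E := ERS A) (sub6 a b (sumP U) c d (sumP V))
          (memRSP1 ⟨μ, ν, rfl⟩)
        simpa [subst, sub6] using this
      have depthA : depth (Tm.plus (.pre μ a) (sumP U)) ≤ depth s := by
        have ha' : depth a + 1 ≤ depth s := depth_summand hma
        have hU' : depth (sumP U) ≤ depth s :=
          depth_sumP fun x hx => depth_summand (hmU x hx)
        simp only [depth]; omega
      have depthB : depth (Tm.plus (.pre μ b) (sumP U)) ≤ depth s := by
        have hb' : depth b + 1 ≤ depth s := depth_summand hmb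
        have hU' : depth (sumP U) ≤ depth s :=
          depth_sumP fun x hx => depth_summand (hmU x hx)
        simp only [depth]; omega
      have depthC : depth (Tm.plus (.pre ν c) (sumP V)) ≤ depth s' := by
        have hc' : depth c + 1 ≤ depth s' := depth_summand hmc
        have hV' : depth (sumP V) ≤ depth s' :=
          depth_sumP fun x hx => depth_summand (hmV x hx)
        simp only [depth]; omega
      have depthD : depth (Tm.plus (.pre ν d) (sumP V)) ≤ depth s' := by
        have hd' : depth d + 1 ≤ depth s' := depth_summand hmd
        have hV' : depth (sumP V) ≤ depth s' :=
          depth_sumP fun x hx => depth_summand (hmV x hx)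
        simp only [depth]; omega
      have hcm : U.length + V.length + 4 ≤ m := by
        rw [hlenL, hlenR] at hc; omega
      obtain ⟨r₁, hr₁, hdr₁⟩ := ihm' (m - 1) (by omega)
        (.plus (.pre μ a) (sumP U)) (.plus (.plus (.pre ν c) (.pre ν d)) (sumP V))
        ⟨hsa, SOP_sumP hsU⟩ hsMs (by omega)
        (by simp only [summ, summ_sumP, List.length_append, List.length_cons,
              List.length_singleton, List.length_nil]; omega)
      obtain ⟨r₂, hr₂, hdr₂⟩ := ihm' (m - 1) (by omega)
        (.plus (.pre μ b) (sumP U)) (.plus (.plus (.pre ν c) (.pre ν d)) (sumP V))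
        ⟨hsb, SOP_sumP hsU⟩ hsMs (by omega)
        (by simp only [summ, summ_sumP, List.length_append, List.length_cons,
              List.length_singleton, List.length_nil]; omega)
      obtain ⟨r₃, hr₃, hdr₃⟩ := ihm' (m - 1) (by omega)
        (.plus (.plus (.pre μ a) (.pre μ b)) (sumP U)) (.plus (.pre ν c) (sumP V))
        hsLs ⟨hsc, SOP_sumP hsV⟩ (by omega)
        (by simp only [summ, summ_sumP, List.length_append, List.length_cons,
              List.length_singleton, List.length_nil]; omega)
      obtain ⟨r₄, hr₄, hdr₄⟩ := ihm' (m - 1) (by omega)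
        (.plus (.plus (.pre μ a) (.pre μ b)) (sumP U)) (.plus (.pre ν d) (sumP V))
        hsLs ⟨hsd, SOP_sumP hsV⟩ (by omega)
        (by simp only [summ, summ_sumP, List.length_append, List.length_cons,
              List.length_singleton, List.length_nil]; omega)
      refine ⟨.plus (.plus (.plus r₁ r₂) r₃) r₄,
        ⟨⟨⟨hr₁, hr₂⟩, hr₃⟩, hr₄⟩, ?_⟩
      exact Deriv.trans (Deriv.par hdsL hdsM) (Deriv.trans hax
        (Deriv.plus (Deriv.plus (Deriv.plus hdr₁ hdr₂) hdr₃) hdr₄))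

lemma toSOP : ∀ t : Tm A, Closed t → ∃ r, SOP r ∧ Deriv (ERS A) t r := by
  intro t
  induction t with
  | nil => intro _; exact ⟨.nil, trivial, Deriv.refl _⟩
  | var k => intro h; exact h.elim
  | pre μ t ih =>
    intro h
    obtain ⟨r, hr, hdr⟩ := ih h
    exact ⟨.pre μ r, hr, Deriv.pre μ hdr⟩
  | plus t u iht ihu =>
    intro h
    obtain ⟨r₁, hr₁, hd₁⟩ := iht h.1
    obtain ⟨r₂, hr₂, hd₂⟩ := ihu h.2
    exact ⟨.plus r₁ r₂, ⟨hr₁, hr₂⟩, Deriv.plus hd₁ hd₂⟩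
  | par t u iht ihu =>
    intro h
    obtain ⟨r₁, hr₁, hd₁⟩ := iht h.1
    obtain ⟨r₂, hr₂, hd₂⟩ := ihu h.2
    obtain ⟨r, hr, hdr⟩ := elim_par (depth r₁ + depth r₂)
      ((summ r₁).length + (summ r₂).length) r₁ r₂ hr₁ hr₂ le_rfl le_rfl
    exact ⟨r, hr, Deriv.trans (Deriv.par hd₁ hd₂) hdr⟩

end RSproof

/-- **Theorem**: `E_RS = E₁ ∪ {RS, RSP1, RSP2, EL2}` is sound and ground-complete
modulo ready simulation equivalence over CCS. -/

theorem stmt_8 (A : Type) [DecidableEq A] :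
    SystemSound RSEq (E1 A ∪ RS A ∪ RSP1 A ∪ RSP2 A ∪ EL2 A) ∧
    GroundComplete RSEq (E1 A ∪ RS A ∪ RSP1 A ∪ RSP2 A ∪ EL2 A) := by
  constructor
  · intro e he σ _
    exact RSproof.sound_ax (t := e.1) (u := e.2) (Prod.mk.eta ▸ he) σ
  · intro p q hp hq hsim
    obtain ⟨np, hnp, hdp⟩ := RSproof.toSOP p hp
    obtain ⟨nq, hnq, hdq⟩ := RSproof.toSOP q hq
    have h1 : RSEq np nq :=
      RSproof.RSEq.trans' (RSproof.RSEq.symm' (RSproof.soundDeriv hdp))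
        (RSproof.RSEq.trans' hsim (RSproof.soundDeriv hdq))
    have hc := RSproof.tree_complete hnp hnq h1.1 h1.2
    exact Deriv.trans hdp (Deriv.trans hc (Deriv.symm hdq))
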